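/- arXiv:2011.13770 — 3 statements merged into one kernel-verified Lean document; each statement's English description precedes it below -/
import Mathlib

section
/- (Path-representation Formula) Let Ω be a slice-open set in W, let f : Ω → ℝ^{2n} be weak slice regular, let γ ∈ 𝒫(ℂ^d, Ω), let J = (J₁, …, J_k) with J₁, …, J_k ∈ 𝒞(γ, Ω), and let I ∈ 𝒞(γ, Ω) satisfy ker(1, I) ⊇ ⋂_{ℓ=1}^k ker(1, J_ℓ). Let P : (ℝ^{2n})^k → ℝ^{2n} × ℝ^{2n} be any linear map with ζ(J) ∘ P ∘ ζ(J) = ζ(J) (in particular, the slice inverse ζ⁺(J) built from the Moore–Penrose inverse). Then for every t ∈ [0,1]: f(γ^I(t)) = (1, I)( P( f(γ^{J₁}(t)), …, f(γ^{J_k}(t)) ) ). -/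
noncomputable section

/-- `ℝ^{2n}` as a Euclidean space. -/
abbrev V (n : ℕ) : Type := EuclideanSpace ℝ (Fin (2 * n))

/-- `End(ℝ^{2n})`: the (continuous, hence in finite dimension all) real-linear
endomorphisms of `ℝ^{2n}`; multiplication is composition. -/
abbrev EndE (n : ℕ) : Type := V n →L[ℝ] V n

/-- The set `𝔠_n` of complex structures on `ℝ^{2n}`. -/
def CS (n : ℕ) : Set (EndE n) := {I | I * I = -1}

/-- The slice `ℂ_I = {x·id + y·I : x, y ∈ ℝ}`. -/
def CI {n : ℕ} (I : EndE n) : Set (EndE n) := {A | ∃ x y : ℝ, A = x • (1 : EndE n) + y • I}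

/-- The slice `ℂ_I^d ⊆ [End(ℝ^{2n})]^d`. -/
def CId (n d : ℕ) (I : EndE n) : Set (Fin d → EndE n) := {q | ∀ ℓ, q ℓ ∈ CI I}

/-- `ℝ^d` identified with the tuples `(x₁·id, …, x_d·id)`. -/
def RealSet (n d : ℕ) : Set (Fin d → EndE n) := {q | ∀ ℓ, ∃ x : ℝ, q ℓ = x • (1 : EndE n)}

/-- The weak slice-cone `W = ⋃_{I ∈ 𝒞} ℂ_I^d`. -/
def Wcone (n d : ℕ) (𝒞 : Set (EndE n)) : Set (Fin d → EndE n) := ⋃ I ∈ 𝒞, CId n d I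

/-- `Ω` is slice-open: `Ω ⊆ W` and for every `I ∈ 𝒞`, `Ω ∩ ℂ_I^d` is open in the
Euclidean (subspace) topology of `ℂ_I^d`. -/
def SliceOpen (n d : ℕ) (𝒞 : Set (EndE n)) (Ω : Set (Fin d → EndE n)) : Prop :=
  Ω ⊆ Wcone n d 𝒞 ∧ ∀ I ∈ 𝒞, ∃ U : Set (Fin d → EndE n), IsOpen U ∧ Ω ∩ CId n d I = U ∩ CId n d I

/-- The slice topology `τ_s`: a set is open iff its intersection with each slice `ℂ_I^d`
(`I ∈ 𝒞`) is open in the Euclidean topology of the slice. -/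
def sliceTop (n d : ℕ) (𝒞 : Set (EndE n)) : TopologicalSpace (Fin d → EndE n) :=
  ⨆ I ∈ 𝒞, TopologicalSpace.coinduced (Subtype.val : CId n d I → Fin d → EndE n) inferInstance

/-- A slice-domain: a nonempty slice-open set, connected in the slice topology. -/
def SliceDomain (n d : ℕ) (𝒞 : Set (EndE n)) (Ω : Set (Fin d → EndE n)) : Prop :=
  SliceOpen n d 𝒞 Ω ∧ @IsConnected _ (sliceTop n d 𝒞) Ω

/-- `Ω` is real-connected: `Ω ∩ ℝ^d` is connected (empty counts as connected). -/
def RealConnected (n d : ℕ) (Ω : Set (Fin d → EndE n)) : Prop :=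
  IsPreconnected (Ω ∩ RealSet n d)

/-- Φ_I : ℝ^d × ℝ^d → [End(ℝ^{2n})]^d, (x, y) ↦ (x₁·id + y₁·I, …, x_d·id + y_d·I). -/
def Phi (n d : ℕ) (I : EndE n) : (Fin d → ℝ) × (Fin d → ℝ) → Fin d → EndE n :=
  fun p ℓ => p.1 ℓ • (1 : EndE n) + p.2 ℓ • I

/-- The standard basis direction in the x-coordinates. -/
def ex (d : ℕ) (ℓ : Fin d) : (Fin d → ℝ) × (Fin d → ℝ) := (Pi.single ℓ 1, 0)

/-- The standard basis direction in the y-coordinates. -/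
def ey (d : ℕ) (ℓ : Fin d) : (Fin d → ℝ) × (Fin d → ℝ) := (0, Pi.single ℓ 1)

/-- f is weak slice regular on Ω: for every I ∈ 𝒞, f ∘ Φ_I is (Fréchet, real)
differentiable on Φ_I⁻¹(Ω) and satisfies the Cauchy–Riemann equations
∂(f∘Φ_I)/∂x_ℓ + I(∂(f∘Φ_I)/∂y_ℓ) = 0 there, for ℓ = 1, …, d. -/
def WSRegular (n d : ℕ) (𝒞 : Set (EndE n)) (Ω : Set (Fin d → EndE n))
    (f : (Fin d → EndE n) → V n) : Prop :=
  ∀ I ∈ 𝒞, DifferentiableOn ℝ (f ∘ Phi n d I) (Phi n d I ⁻¹' Ω) ∧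
    ∀ p ∈ Phi n d I ⁻¹' Ω, ∀ ℓ : Fin d,
      fderiv ℝ (f ∘ Phi n d I) p (ex d ℓ) + I (fderiv ℝ (f ∘ Phi n d I) p (ey d ℓ)) = 0

/-- Ψ_I : ℂ^d → ℂ_I^d, defined componentwise by x + y i ↦ x·id + y·I. -/
def Psi (n d : ℕ) (I : EndE n) : (Fin d → ℂ) → Fin d → EndE n :=
  fun z ℓ => (z ℓ).re • (1 : EndE n) + (z ℓ).im • I

/-- γ belongs to 𝒫(ℂ^d): γ is a continuous path on [0,1] in ℂ^d with real initial
point. -/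
def IsPath0 (d : ℕ) (γ : ℝ → Fin d → ℂ) : Prop :=
  ContinuousOn γ (Set.Icc 0 1) ∧ ∀ ℓ, (γ 0 ℓ).im = 0

/-- 𝒞(γ, Ω): the set of I ∈ 𝒞 with γ^I([0,1]) ⊆ Ω, where γ^I = Ψ_I ∘ γ. -/
def CPath (n d : ℕ) (𝒞 : Set (EndE n)) (Ω : Set (Fin d → EndE n))
    (γ : ℝ → Fin d → ℂ) : Set (EndE n) :=
  {I ∈ 𝒞 | ∀ t ∈ Set.Icc (0:ℝ) 1, Psi n d I (γ t) ∈ Ω}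

/-- γ ∈ 𝒫(ℂ^d, Ω): γ ∈ 𝒫(ℂ^d) and γ^I([0,1]) ⊆ Ω for some I ∈ 𝒞. -/
def PathIn (n d : ℕ) (𝒞 : Set (EndE n)) (Ω : Set (Fin d → EndE n))
    (γ : ℝ → Fin d → ℂ) : Prop :=
  IsPath0 d γ ∧ (CPath n d 𝒞 Ω γ).Nonempty

/-- The linear map (1, I) : ℝ^{2n} × ℝ^{2n} → ℝ^{2n}, (a, b) ↦ a + I(b). -/
def oneI (n : ℕ) (I : EndE n) : (V n × V n) →ₗ[ℝ] V n :=
  LinearMap.fst ℝ (V n) (V n) + I.toLinearMap ∘ₗ LinearMap.snd ℝ (V n) (V n)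

/-- The linear map ζ(J) : ℝ^{2n} × ℝ^{2n} → (ℝ^{2n})^k, (a, b) ↦ (a + J₁(b), …, a + J_k(b)). -/
def zeta (n k : ℕ) (J : Fin k → EndE n) : (V n × V n) →ₗ[ℝ] (Fin k → V n) :=
  LinearMap.pi fun ℓ => oneI n (J ℓ)



section PRFmachinery
open Metric Filter Topology

section CStruct

variable {F : Type*} [AddCommGroup F] [Module ℝ F]

/-- The `ℂ`-module structure induced by a complex structure `T`. -/
def cMod (T : F →ₗ[ℝ] F) (hT : ∀ v, T (T v) = -v) : Module ℂ F :=
  letI : SMul ℂ F := ⟨fun z v => z.re • v + z.im • T v⟩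
  Module.ofMinimalAxioms
    (fun r x y => by
      show r.re • (x + y) + r.im • T (x + y) = (r.re • x + r.im • T x) + (r.re • y + r.im • T y)
      rw [map_add, smul_add, smul_add]; abel)
    (fun r s x => by
      show (r + s).re • x + (r + s).im • T x = (r.re • x + r.im • T x) + (s.re • x + s.im • T x)
      rw [Complex.add_re, Complex.add_im, add_smul, add_smul]; abel)
    (fun r s x => by
      show (r * s).re • x + (r * s).im • T x
        = r.re • (s.re • x + s.im • T x) + r.im • T (s.re • x + s.im • T x)
      rw [Complex.mul_re, Complex.mul_im, map_add, map_smul, map_smul, hT]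
      rw [smul_add, smul_add, sub_smul, add_smul, smul_neg]
      rw [mul_smul, mul_smul, mul_smul, mul_smul, sub_eq_add_neg]
      simp only [neg_one_smul, smul_neg, neg_smul]
      abel)
    (fun x => by
      show (1:ℂ).re • x + (1:ℂ).im • T x = x
      simp)

lemma cMod_smul_def (T : F →ₗ[ℝ] F) (hT : ∀ v, T (T v) = -v) (z : ℂ) (v : F) :
    letI := cMod T hT
    z • v = z.re • v + z.im • T v := rfl

lemma cMod_I_smul (T : F →ₗ[ℝ] F) (hT : ∀ v, T (T v) = -v) (v : F) :
    letI := cMod T hT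
    Complex.I • v = T v := by
  show Complex.I.re • v + Complex.I.im • T v = T v
  simp

lemma cMod_tower (T : F →ₗ[ℝ] F) (hT : ∀ v, T (T v) = -v) :
    letI := cMod T hT
    IsScalarTower ℝ ℂ F := by
  letI := cMod T hT
  constructor
  intro x z v
  show (x • z).re • v + (x • z).im • T v = x • (z.re • v + z.im • T v)
  rw [Complex.real_smul, Complex.mul_re, Complex.mul_im]
  simp [mul_smul, smul_add]

end CStruct

section DiffC

variable {F : Type*} [NormedAddCommGroup F] [NormedSpace ℝ F] [NormedSpace ℂ F]
  [IsScalarTower ℝ ℂ F] {d : ℕ}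

/-- Real differentiability plus `ℂ`-linearity of the derivative gives `ℂ`-differentiability. -/
lemma diffC_at {g : (Fin d → ℂ) → F} {z : Fin d → ℂ} {D : (Fin d → ℂ) →L[ℝ] F}
    (h : HasFDerivAt g D z) (hi : ∀ w, D (Complex.I • w) = Complex.I • D w) :
    DifferentiableAt ℂ g z := by
  have hsmul : ∀ (c : ℂ) (w : Fin d → ℂ), D (c • w) = c • D w := by
    intro c w
    have hc : c • w = c.re • w + c.im • (Complex.I • w) := by
      conv_lhs => rw [← Complex.re_add_im c]
      match_scalars <;> (simp [Complex.coe_algebraMap]; try ring)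
    rw [hc, map_add, map_smul, map_smul, hi]
    conv_rhs => rw [← Complex.re_add_im c]
    match_scalars <;> (simp [Complex.coe_algebraMap]; try ring)
  let Dc : (Fin d → ℂ) →L[ℂ] F :=
    { toLinearMap := { toFun := D, map_add' := map_add D, map_smul' := hsmul }
      cont := D.cont }
  have : HasFDerivAt g Dc z := hasFDerivAt_of_restrictScalars ℝ h (by ext w; rfl)
  exact this.differentiableAt

end DiffC


/-- Propagation of vanishing for a several-variables ℂ-differentiable function on a
polydisc (= sup-metric ball), from vanishing on a product of sets clustering at the center. -/
lemma polydisc_zero {E : Type*} [NormedAddCommGroup E] [NormedSpace ℂ E] [CompleteSpace E]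
    {d : ℕ} {g : (Fin d → ℂ) → E} {q : Fin d → ℂ} {r : ℝ} (hr : 0 < r)
    (hg : DifferentiableOn ℂ g (ball q r))
    (D : Fin d → Set ℂ) (hD : ∀ i, D i ⊆ ball (q i) r)
    (hacc : ∀ i, ∃ᶠ w in 𝓝[≠] (q i), w ∈ D i)
    (hz : ∀ z : Fin d → ℂ, (∀ i, z i ∈ D i) → g z = 0) :
    ∀ z ∈ ball q r, g z = 0 := by
  have key : ∀ j : ℕ, ∀ z ∈ ball q r, (∀ i : Fin d, j ≤ (i : ℕ) → z i ∈ D i) → g z = 0 := by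
    intro j
    induction j with
    | zero => exact fun z _ h => hz z fun i => h i (Nat.zero_le _)
    | succ j ih =>
      intro z hzball hcoords
      by_cases hjd : j < d
      · set ℓ : Fin d := ⟨j, hjd⟩ with hℓ
        set φ : ℂ → E := fun w => g (Function.update z ℓ w) with hφ
        have hupd : ∀ w ∈ ball (q ℓ) r, Function.update z ℓ w ∈ ball q r := by
          intro w hw
          rw [mem_ball, dist_pi_lt_iff hr]
          intro i
          rcases eq_or_ne i ℓ with rfl | hi
          · simpa [Function.update_self] using hw
          · rw [Function.update_of_ne hi]
            exact (dist_pi_lt_iff hr).1 hzball i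
        have hupddiff : DifferentiableOn ℂ (fun w => Function.update z ℓ w) (ball (q ℓ) r) := by
          have : (fun w : ℂ => Function.update z ℓ w) =
              fun w => z + Pi.single ℓ (w - z ℓ) := by
            funext w
            funext i
            rcases eq_or_ne i ℓ with rfl | hi
            · simp [Function.update_self]
            · simp [Function.update_of_ne hi, Pi.single_apply, hi]
          rw [this]
          apply DifferentiableOn.const_add
          apply Differentiable.differentiableOn
          apply differentiable_pi.2
          intro i
          rcases eq_or_ne i ℓ with rfl | hi
          · simpa [Pi.single_apply] using (differentiable_id.sub_const (z i))
          · simpa [Pi.single_apply, hi] using (differentiable_const (0:ℂ))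
        have hφdiff : DifferentiableOn ℂ φ (ball (q ℓ) r) :=
          hg.comp hupddiff fun w hw => hupd w hw
        have hφan : AnalyticOnNhd ℂ φ (ball (q ℓ) r) :=
          hφdiff.analyticOnNhd isOpen_ball
        have hφzero : ∀ w ∈ D ℓ, φ w = 0 := by
          intro w hw
          apply ih _ (hupd w (hD ℓ hw))
          intro i hi
          rcases eq_or_ne i ℓ with rfl | hne
          · simpa [Function.update_self] using hw
          · rw [Function.update_of_ne hne]
            refine hcoords i ?_
            rcases lt_or_ge (j : ℕ) (i : ℕ) with h | h
            · exact h
            · exact absurd (Fin.ext (le_antisymm h hi) : i = ℓ) hne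
        have hfreq : ∃ᶠ w in 𝓝[≠] (q ℓ), φ w = 0 :=
          (hacc ℓ).mono fun w hw => hφzero w hw
        have := hφan.eqOn_zero_of_preconnected_of_frequently_eq_zero
          (convex_ball (q ℓ) r).isPreconnected (mem_ball_self hr) hfreq
        have hzℓ : z ℓ ∈ ball (q ℓ) r := (dist_pi_lt_iff hr).1 hzball ℓ
        have := this hzℓ
        simpa [hφ, Function.update_eq_self] using this
      · exact ih z hzball fun i hi => absurd (lt_of_lt_of_le i.2 (not_lt.1 hjd)) (not_lt.2 hi)
  intro z hzball
  exact key d z hzball fun i hi => absurd hi (not_le.2 i.2)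

/-- If a several-variables ℂ-differentiable function vanishes in a neighborhood of a point,
it vanishes on the connected component of that point. -/
lemma zero_on_component {E : Type*} [NormedAddCommGroup E] [NormedSpace ℂ E] [CompleteSpace E]
    {d : ℕ} {g : (Fin d → ℂ) → E} {U : Set (Fin d → ℂ)} (hU : IsOpen U)
    (hg : DifferentiableOn ℂ g U) {z₀ : Fin d → ℂ} (hz₀ : z₀ ∈ U)
    (hnear : ∀ᶠ w in 𝓝 z₀, g w = 0) :
    ∀ z ∈ connectedComponentIn U z₀, g z = 0 := by
  set A : Set (Fin d → ℂ) := {z | ∀ᶠ w in 𝓝 z, g w = 0} with hA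
  have hAopen : IsOpen A := isOpen_setOf_eventually_nhds
  set O := connectedComponentIn U z₀ with hO
  have hOU : O ⊆ U := connectedComponentIn_subset U z₀
  have hOsub : O ⊆ A ∪ (closure A)ᶜ := by
    intro z hz
    by_cases hcl : z ∈ closure A
    · left
      -- propagation from a nearby point of A
      obtain ⟨ε, hε, hball⟩ := Metric.isOpen_iff.1 hU z (hOU hz)
      set r := ε / 3 with hr
      have hrpos : 0 < r := by positivity
      obtain ⟨q, hqA, hqz⟩ := Metric.mem_closure_iff.1 hcl r hrpos
      obtain ⟨ε', hε', hqball⟩ := Metric.eventually_nhds_iff_ball.1 hqA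
      set ε'' := min ε' r with hε''
      have hε''pos : 0 < ε'' := lt_min hε' hrpos
      have hballU : ball q (2 * r) ⊆ U := by
        intro w hw
        apply hball
        rw [mem_ball] at hw ⊢
        calc dist w z ≤ dist w q + dist q z := dist_triangle w q z
          _ < 2 * r + r := by
              have : dist q z < r := by rwa [dist_comm] at hqz
              linarith
          _ = ε := by rw [hr]; ring
      have := polydisc_zero (g := g) (q := q) (r := 2 * r) (by positivity)
        (hg.mono hballU) (fun i => ball (q i) ε'')
        (fun i => ball_subset_ball (le_trans (min_le_right _ _) (by linarith)))
        (fun i => by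
          have hmem : ball (q i) ε'' ∈ 𝓝 (q i) := ball_mem_nhds _ hε''pos
          exact (eventually_nhdsWithin_of_eventually_nhds hmem).frequently)
        (fun z' hz' => hqball z' (mem_ball.2 (lt_of_lt_of_le
          ((dist_pi_lt_iff hε''pos).2 fun i => hz' i) (min_le_left _ _))))
      have hzball : z ∈ ball q (2 * r) := by
        rw [mem_ball, dist_comm]
        calc dist q z < r := by rwa [dist_comm] at hqz
          _ < 2 * r := by linarith
      exact Filter.eventually_iff_exists_mem.2
        ⟨ball q (2 * r), isOpen_ball.mem_nhds hzball, fun w hw => this w hw⟩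
    · right; exact hcl
  have hdisj : Disjoint A (closure A)ᶜ :=
    Set.disjoint_left.2 fun z hz hz' => hz' (subset_closure hz)
  have hOA : O ⊆ A := by
    refine IsPreconnected.subset_left_of_subset_union hAopen
      (isOpen_compl_iff.2 isClosed_closure) hdisj hOsub ?_
      isPreconnected_connectedComponentIn
    exact ⟨z₀, mem_connectedComponentIn hz₀, hnear⟩
  intro z hz
  exact (hOA hz).self_of_nhds


namespace PRFaux

lemma prod_decomp {d : ℕ} (p : (Fin d → ℝ) × (Fin d → ℝ)) :
    p = ∑ i : Fin d, (p.1 i • ex d i + p.2 i • ey d i) := by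
  classical
  have key : ∀ i : Fin d, p.1 i • ex d i + p.2 i • ey d i
      = (Pi.single i (p.1 i), Pi.single i (p.2 i)) := by
    intro i
    refine Prod.ext ?_ ?_
    · show p.1 i • (Pi.single i (1:ℝ) : Fin d → ℝ) + p.2 i • (0 : Fin d → ℝ)
        = (Pi.single i (p.1 i) : Fin d → ℝ)
      rw [← Pi.single_smul' i (p.1 i) (1:ℝ), smul_eq_mul, mul_one, smul_zero, add_zero]
    · show p.1 i • (0 : Fin d → ℝ) + p.2 i • (Pi.single i (1:ℝ) : Fin d → ℝ)
        = (Pi.single i (p.2 i) : Fin d → ℝ)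
      rw [← Pi.single_smul' i (p.2 i) (1:ℝ), smul_eq_mul, mul_one, smul_zero, zero_add]
  rw [Finset.sum_congr rfl (fun i _ => key i)]
  refine Prod.ext ?_ ?_
  · rw [Prod.fst_sum]
    exact (Finset.univ_sum_single p.1).symm
  · rw [Prod.snd_sum]
    exact (Finset.univ_sum_single p.2).symm

lemma cr_upgrade {n d : ℕ} {A : EndE n} (hAA : ∀ v, A (A v) = -v)
    (Du : ((Fin d → ℝ) × (Fin d → ℝ)) →L[ℝ] V n)
    (hCR : ∀ i, Du (ex d i) + A (Du (ey d i)) = 0) (p : (Fin d → ℝ) × (Fin d → ℝ)) :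
    Du (-p.2, p.1) = A (Du p) := by
  have h2 : ∀ i, A (Du (ey d i)) = -Du (ex d i) :=
    fun i => eq_neg_of_add_eq_zero_right (hCR i)
  have h1 : ∀ i, A (Du (ex d i)) = Du (ey d i) := by
    intro i
    have := congrArg A (h2 i)
    rw [hAA, map_neg] at this
    exact (neg_injective this).symm
  conv_lhs => rw [prod_decomp (-p.2, p.1)]
  conv_rhs => rw [prod_decomp p]
  rw [map_sum, map_sum, map_sum]
  refine Finset.sum_congr rfl fun i _ => ?_
  simp only [map_add, map_smul, h1, h2]
  show (-p.2) i • Du (ex d i) + p.1 i • Du (ey d i)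
    = p.1 i • Du (ey d i) + p.2 i • -Du (ex d i)
  rw [Pi.neg_apply, neg_smul, smul_neg]
  abel

end PRFaux

end PRFmachinery

open Metric Filter Topology

/-- (Path-representation Formula) If f is weak slice regular on a slice-open Ω,
γ ∈ 𝒫(ℂ^d, Ω), J₁, …, J_k ∈ 𝒞(γ, Ω), I ∈ 𝒞(γ, Ω) with
ker(1, I) ⊇ ⋂_ℓ ker(1, J_ℓ), and P is linear with ζ(J) ∘ P ∘ ζ(J) = ζ(J), then
f(γ^I(t)) = (1, I)(P(f(γ^{J₁}(t)), …, f(γ^{J_k}(t)))) for all t ∈ [0,1]. -/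

theorem path_representation_formula (n d : ℕ) (hn : 1 ≤ n) (hd : 1 ≤ d)
    (𝒞 : Set (EndE n)) (h𝒞 : 𝒞.Nonempty) (hsym : ∀ I ∈ 𝒞, -I ∈ 𝒞) (hcs : 𝒞 ⊆ CS n)
    (Ω : Set (Fin d → EndE n)) (hΩ : SliceOpen n d 𝒞 Ω)
    (f : (Fin d → EndE n) → V n) (hf : WSRegular n d 𝒞 Ω f)
    (γ : ℝ → Fin d → ℂ) (hγ : IsPath0 d γ)
    (k : ℕ) (J : Fin k → EndE n) (hJ : ∀ ℓ, J ℓ ∈ CPath n d 𝒞 Ω γ)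
    (I : EndE n) (hI : I ∈ CPath n d 𝒞 Ω γ)
    (hker : (⨅ ℓ, LinearMap.ker (oneI n (J ℓ))) ≤ LinearMap.ker (oneI n I))
    (P : (Fin k → V n) →ₗ[ℝ] V n × V n)
    (hP : zeta n k J ∘ₗ P ∘ₗ zeta n k J = zeta n k J) :
    ∀ t ∈ Set.Icc (0:ℝ) 1,
      f (Psi n d I (γ t)) = oneI n I (P fun ℓ => f (Psi n d (J ℓ) (γ t))) := by
  classical
  intro t ht
  -- the combined family of (k+1) complex structures
  set K : Fin (k+1) → EndE n := Fin.cons I J with hKdef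
  have hKmem : ∀ ℓ, K ℓ ∈ CPath n d 𝒞 Ω γ := by
    intro ℓ
    refine Fin.cases ?_ ?_ ℓ
    · simpa [hKdef] using hI
    · intro j; simpa [hKdef] using hJ j
  have hK𝒞 : ∀ ℓ, K ℓ ∈ 𝒞 := fun ℓ => (hKmem ℓ).1
  have hKK : ∀ ℓ v, K ℓ (K ℓ v) = -v := by
    intro ℓ v
    have h := hcs (hK𝒞 ℓ)
    have h2 := congrArg (fun (A : EndE n) => A v) h
    simpa using h2
  -- the diagonal complex structure on (Fin (k+1) → V n)
  set JL : (Fin (k+1) → V n) →ₗ[ℝ] (Fin (k+1) → V n) :=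
    LinearMap.pi (fun ℓ => (K ℓ).toLinearMap.comp (LinearMap.proj ℓ)) with hJLdef
  have hJLapp : ∀ v ℓ, JL v ℓ = K ℓ (v ℓ) := fun v ℓ => rfl
  have hJL : ∀ v, JL (JL v) = -v := by
    intro v; funext ℓ
    show K ℓ (JL v ℓ) = -v ℓ
    rw [hJLapp]; exact hKK ℓ (v ℓ)
  letI cM : Module ℂ (Fin (k+1) → V n) := cMod JL hJL
  haveI cTower : IsScalarTower ℝ ℂ (Fin (k+1) → V n) := cMod_tower JL hJL
  haveI cFin : Module.Finite ℂ (Fin (k+1) → V n) :=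
    Module.Finite.of_restrictScalars_finite ℝ ℂ _
  set Z := zeta n (k+1) K with hZdef
  have hZapp : ∀ ab ℓ, Z ab ℓ = ab.1 + K ℓ ab.2 := fun ab ℓ => rfl
  -- range of Z as a ℂ-submodule
  have hJLZ : ∀ ab : V n × V n, JL (Z ab) = Z (-ab.2, ab.1) := by
    intro ab; funext ℓ
    rw [hJLapp, hZapp, hZapp]
    rw [map_add (K ℓ), hKK ℓ ab.2]
    abel
  let S : Submodule ℂ (Fin (k+1) → V n) :=
    { carrier := Set.range Z
      add_mem' := by rintro _ _ ⟨a, rfl⟩ ⟨b, rfl⟩; exact ⟨a + b, map_add Z a b⟩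
      zero_mem' := ⟨0, map_zero Z⟩
      smul_mem' := by
        rintro z _ ⟨ab, rfl⟩
        refine ⟨z.re • ab + z.im • (-ab.2, ab.1), ?_⟩
        rw [map_add, map_smul, map_smul]
        rw [show (z • Z ab : Fin (k+1) → V n) = z.re • Z ab + z.im • JL (Z ab) from
          cMod_smul_def JL hJL z (Z ab)]
        rw [hJLZ] }
  have hSrange : ∀ v, v ∈ S ↔ v ∈ Set.range Z := fun v => Iff.rfl
  -- quotient by S, transported to ℂ^m
  haveI hfinQ : Module.Finite ℂ ((Fin (k+1) → V n) ⧸ S) :=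
    Module.Finite.of_surjective S.mkQ (Submodule.mkQ_surjective S)
  set m := Module.finrank ℂ ((Fin (k+1) → V n) ⧸ S) with hmdef
  let bQ : Module.Basis (Fin m) ℂ ((Fin (k+1) → V n) ⧸ S) := Module.finBasis ℂ _
  let Lc : (Fin (k+1) → V n) →ₗ[ℂ] (Fin m → ℂ) :=
    (bQ.equivFun.toLinearMap).comp S.mkQ
  have hLc0 : ∀ v, Lc v = 0 ↔ v ∈ S := by
    intro v
    constructor
    · intro h
      have h2 : bQ.equivFun (S.mkQ v) = 0 := h
      have h3 : S.mkQ v = 0 := by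
        rwa [LinearEquiv.map_eq_zero_iff] at h2
      rwa [Submodule.mkQ_apply, Submodule.Quotient.mk_eq_zero] at h3
    · intro h
      have h3 : S.mkQ v = 0 := by
        rwa [Submodule.mkQ_apply, Submodule.Quotient.mk_eq_zero]
      show bQ.equivFun (S.mkQ v) = 0
      rw [h3, map_zero]
  have hLcI : ∀ v, Lc (JL v) = Complex.I • Lc v := by
    intro v
    have h1 : JL v = Complex.I • v := (cMod_I_smul JL hJL v).symm
    rw [h1, map_smul]
  let LcC : (Fin (k+1) → V n) →L[ℝ] (Fin m → ℂ) :=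
    LinearMap.toContinuousLinearMap (Lc.restrictScalars ℝ)
  have hLcCapp : ∀ v, LcC v = Lc v := fun v => rfl
  -- realification of ℂ^d
  let rC : (Fin d → ℂ) →L[ℝ] (Fin d → ℝ) × (Fin d → ℝ) :=
    (ContinuousLinearMap.pi fun ℓ => Complex.reCLM.comp (ContinuousLinearMap.proj ℓ)).prod
    (ContinuousLinearMap.pi fun ℓ => Complex.imCLM.comp (ContinuousLinearMap.proj ℓ))
  have hPsiPhi : ∀ (A : EndE n) z, Psi n d A z = Phi n d A (rC z) := fun A z => rfl
  -- openness of slice preimages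
  have hPhiOpen : ∀ A ∈ 𝒞, IsOpen (Phi n d A ⁻¹' Ω) := by
    intro A hA
    obtain ⟨U, hUopen, hUeq⟩ := hΩ.2 A hA
    have hrange : ∀ p, Phi n d A p ∈ CId n d A := fun p ℓ => ⟨p.1 ℓ, p.2 ℓ, rfl⟩
    have heq : Phi n d A ⁻¹' Ω = Phi n d A ⁻¹' U := by
      ext p
      constructor
      · intro hp
        have h2 : Phi n d A p ∈ Ω ∩ CId n d A := ⟨hp, hrange p⟩
        rw [hUeq] at h2; exact h2.1
      · intro hp
        have h2 : Phi n d A p ∈ U ∩ CId n d A := ⟨hp, hrange p⟩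
        rw [← hUeq] at h2; exact h2.1
    rw [heq]
    refine hUopen.preimage ?_
    apply continuous_pi
    intro ℓ
    exact (((continuous_apply ℓ).comp continuous_fst).smul continuous_const).add
      (((continuous_apply ℓ).comp continuous_snd).smul continuous_const)
  have hPsiOpen : ∀ A ∈ 𝒞, IsOpen ((fun z => Psi n d A z) ⁻¹' Ω) := by
    intro A hA
    have heq : (fun z => Psi n d A z) ⁻¹' Ω = rC ⁻¹' (Phi n d A ⁻¹' Ω) := rfl
    rw [heq]
    exact (hPhiOpen A hA).preimage rC.continuous
  -- the common open set
  set U₀ : Set (Fin d → ℂ) := ⋂ ℓ : Fin (k+1), (fun z => Psi n d (K ℓ) z) ⁻¹' Ω with hU₀def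
  have hU₀open : IsOpen U₀ :=
    isOpen_iInter_of_finite fun ℓ => hPsiOpen (K ℓ) (hK𝒞 ℓ)
  have hγU₀ : ∀ s ∈ Set.Icc (0:ℝ) 1, γ s ∈ U₀ := by
    intro s hs
    exact Set.mem_iInter.2 fun ℓ => (hKmem ℓ).2 s hs
  -- the combined function and its projection
  set Ef : (Fin d → ℂ) → (Fin (k+1) → V n) := fun z ℓ => f (Psi n d (K ℓ) z) with hEfdef
  set g : (Fin d → ℂ) → (Fin m → ℂ) := fun z => Lc (Ef z) with hgdef
  -- vanishing at real points
  have hreal : ∀ z : Fin d → ℂ, (∀ i, (z i).im = 0) → Ef z ∈ S := by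
    intro z hz
    refine ⟨(f (Psi n d I z), 0), ?_⟩
    funext ℓ
    rw [hZapp]
    have hsame : Psi n d (K ℓ) z = Psi n d I z := by
      funext i
      show (z i).re • (1:EndE n) + (z i).im • K ℓ = (z i).re • 1 + (z i).im • I
      rw [hz i, zero_smul ℝ (K ℓ), zero_smul ℝ I]
    show f (Psi n d I z) + (K ℓ) 0 = f (Psi n d (K ℓ) z)
    rw [hsame, map_zero, add_zero]
  have hgreal : ∀ z : Fin d → ℂ, (∀ i, (z i).im = 0) → g z = 0 :=
    fun z hz => (hLc0 _).2 (hreal z hz)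
  -- complex differentiability of g on U₀
  have hgdiff : DifferentiableOn ℂ g U₀ := by
    intro z hz
    have hcomp : ∀ ℓ : Fin (k+1), ∃ Dl : (Fin d → ℂ) →L[ℝ] V n,
        HasFDerivAt (fun z => f (Psi n d (K ℓ) z)) Dl z ∧
        ∀ w, Dl (Complex.I • w) = (K ℓ) (Dl w) := by
      intro ℓ
      have hA𝒞 := hK𝒞 ℓ
      have hp : rC z ∈ Phi n d (K ℓ) ⁻¹' Ω := by
        show Phi n d (K ℓ) (rC z) ∈ Ω
        rw [← hPsiPhi]
        exact Set.mem_iInter.1 hz ℓ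
      have hdiff : DifferentiableAt ℝ (f ∘ Phi n d (K ℓ)) (rC z) :=
        (hf (K ℓ) hA𝒞).1.differentiableAt ((hPhiOpen (K ℓ) hA𝒞).mem_nhds hp)
      have hCR := (hf (K ℓ) hA𝒞).2 (rC z) hp
      set Du := fderiv ℝ (f ∘ Phi n d (K ℓ)) (rC z) with hDudef
      refine ⟨Du.comp rC, ?_, ?_⟩
      · exact hdiff.hasFDerivAt.comp z rC.hasFDerivAt
      · intro w
        show Du (rC (Complex.I • w)) = (K ℓ) (Du (rC w))
        have hrCI : rC (Complex.I • w) = (-(rC w).2, (rC w).1) := by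
          refine Prod.ext ?_ ?_
          · funext i
            show (Complex.I * w i).re = -(w i).im
            simp [Complex.mul_re]
          · funext i
            show (Complex.I * w i).im = (w i).re
            simp [Complex.mul_im]
        rw [hrCI]
        exact PRFaux.cr_upgrade (hKK ℓ) Du hCR (rC w)
    choose D hD1 hD2 using hcomp
    have hDE : HasFDerivAt Ef (ContinuousLinearMap.pi D) z := hasFDerivAt_pi.2 hD1
    have hgD : HasFDerivAt g (LcC.comp (ContinuousLinearMap.pi D)) z :=
      LcC.hasFDerivAt.comp z hDE
    have : DifferentiableAt ℂ g z := by
      refine diffC_at hgD ?_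
      intro w
      show LcC ((ContinuousLinearMap.pi D) (Complex.I • w))
        = Complex.I • LcC ((ContinuousLinearMap.pi D) w)
      have hpi : (ContinuousLinearMap.pi D) (Complex.I • w)
          = JL ((ContinuousLinearMap.pi D) w) := by
        funext ℓ
        rw [hJLapp]
        exact hD2 ℓ w
      rw [hpi, hLcCapp, hLcCapp, hLcI]
    exact this.differentiableWithinAt
  -- g vanishes near the real starting point
  have hγ0 : γ 0 ∈ U₀ := hγU₀ 0 (by norm_num)
  obtain ⟨r, hr, hball⟩ := Metric.isOpen_iff.1 hU₀open (γ 0) hγ0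
  have hgball : ∀ w ∈ Metric.ball (γ 0) r, g w = 0 := by
    refine polydisc_zero hr (hgdiff.mono hball)
      (fun i => {w : ℂ | w.im = 0 ∧ dist w (γ 0 i) < r}) ?_ ?_ ?_
    · intro i w hw; exact Metric.mem_ball.2 hw.2
    · intro i
      have h1 : Filter.Tendsto (fun s : ℝ => γ 0 i + (s:ℂ)) (𝓝 (0:ℝ)) (𝓝 (γ 0 i)) := by
        have h2 : Continuous (fun s : ℝ => γ 0 i + (s:ℂ)) :=
          continuous_const.add Complex.continuous_ofReal
        have h3 := h2.tendsto (0:ℝ)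
        simpa using h3
      have h2 : Filter.Tendsto (fun s : ℝ => γ 0 i + (s:ℂ)) (𝓝[≠] (0:ℝ)) (𝓝[≠] (γ 0 i)) := by
        rw [tendsto_nhdsWithin_iff]
        refine ⟨h1.mono_left nhdsWithin_le_nhds, ?_⟩
        refine eventually_mem_nhdsWithin.mono ?_
        intro s hs h
        apply hs
        have h3 : (s:ℂ) = 0 := by
          have := add_left_cancel (h.trans (add_zero (γ 0 i)).symm)
          exact this
        exact_mod_cast h3
      refine h2.frequently (Filter.Eventually.frequently ?_)
      have hev : ∀ᶠ s : ℝ in 𝓝[≠] (0:ℝ), |s| < r := by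
        apply eventually_nhdsWithin_of_eventually_nhds
        have h4 : ∀ᶠ s : ℝ in 𝓝 (0:ℝ), s ∈ Metric.ball (0:ℝ) r :=
          Metric.isOpen_ball.eventually_mem (Metric.mem_ball_self hr)
        refine h4.mono fun s hs => ?_
        simpa [Real.dist_eq] using hs
      refine hev.mono fun s hs => ?_
      constructor
      · show (γ 0 i + (s:ℂ)).im = 0
        rw [Complex.add_im, hγ.2 i, Complex.ofReal_im, add_zero]
      · show dist (γ 0 i + (s:ℂ)) (γ 0 i) < r
        rw [dist_comm, Complex.dist_eq]
        simpa using hs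
    · intro z' hz'
      exact hgreal z' fun i => (hz' i).1
  have hnear : ∀ᶠ w in 𝓝 (γ 0), g w = 0 :=
    Filter.eventually_iff_exists_mem.2
      ⟨Metric.ball (γ 0) r, Metric.ball_mem_nhds _ hr, hgball⟩
  -- propagate along the path
  have hγO : γ t ∈ connectedComponentIn U₀ (γ 0) := by
    have himg : IsPreconnected (γ '' Set.Icc 0 1) := isPreconnected_Icc.image γ hγ.1
    have hsub : γ '' Set.Icc 0 1 ⊆ U₀ := by
      rintro _ ⟨s, hs, rfl⟩; exact hγU₀ s hs
    have h0 : γ 0 ∈ γ '' Set.Icc 0 1 := ⟨0, by norm_num, rfl⟩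
    exact himg.subset_connectedComponentIn h0 hsub ⟨t, ht, rfl⟩
  have hgt : g (γ t) = 0 :=
    zero_on_component hU₀open hgdiff hγ0 hnear _ hγO
  -- final algebra
  obtain ⟨ab, hab⟩ : Ef (γ t) ∈ S := (hLc0 _).1 hgt
  have hIeq : f (Psi n d I (γ t)) = oneI n I ab := by
    have h1 := congrFun hab 0
    rw [hZapp] at h1
    have h2 : K 0 = I := Fin.cons_zero _ _
    rw [h2] at h1
    have h3 : Ef (γ t) 0 = f (Psi n d I (γ t)) := by
      show f (Psi n d (K 0) (γ t)) = f (Psi n d I (γ t))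
      rw [h2]
    rw [h3] at h1
    exact h1.symm
  have hJeq : (fun ℓ => f (Psi n d (J ℓ) (γ t))) = zeta n k J ab := by
    funext ℓ
    have h1 := congrFun hab ℓ.succ
    rw [hZapp] at h1
    have h2 : K ℓ.succ = J ℓ := Fin.cons_succ _ _ _
    rw [h2] at h1
    have h3 : Ef (γ t) ℓ.succ = f (Psi n d (J ℓ) (γ t)) := by
      show f (Psi n d (K ℓ.succ) (γ t)) = f (Psi n d (J ℓ) (γ t))
      rw [h2]
    rw [h3] at h1
    exact h1.symm
  rw [hJeq]
  have hPk : P (zeta n k J ab) - ab ∈ LinearMap.ker (zeta n k J) := by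
    rw [LinearMap.mem_ker, map_sub]
    have h1 := DFunLike.congr_fun hP ab
    simp only [LinearMap.comp_apply] at h1
    rw [h1, sub_self]
  have hIk : P (zeta n k J ab) - ab ∈ LinearMap.ker (oneI n I) := by
    apply hker
    have : LinearMap.ker (zeta n k J) = ⨅ ℓ, LinearMap.ker (oneI n (J ℓ)) :=
      LinearMap.ker_pi _
    rw [← this]
    exact hPk
  have h0 := LinearMap.mem_ker.1 hIk
  rw [map_sub, sub_eq_zero] at h0
  rw [h0, ← hIeq]
end
end

section
/- (Classical Path-representation Formula) Let Ω be a slice-open set in W, let f : Ω → ℝ^{2n} be weak slice regular, let γ ∈ 𝒫(ℂ^d, Ω), and let I, J₁, J₂ ∈ 𝒞(γ, Ω) with J₁ − J₂ invertible in End(ℝ^{2n}). Then for every t ∈ [0,1]: f(γ^I(t)) = (I − J₂)( (J₁ − J₂)⁻¹( f(γ^{J₁}(t)) ) ) − (I − J₁)( (J₁ − J₂)⁻¹( f(γ^{J₂}(t)) ) ). -/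
noncomputable section

section Auxiliary

open Metric Filter

lemma mul_apply' {n : ℕ} (K L : EndE n) (v : V n) : (K * L) v = K (L v) := rfl

lemma sq_neg_one_apply {n : ℕ} {K : EndE n} (hK : K * K = -1) (v : V n) : K (K v) = -v := by
  have := congrArg (fun T : EndE n => T v) hK
  simpa [mul_apply'] using this

/-- Identity spread lemma on poly-balls via iterated 1-variable identity theorem. -/
lemma spread_zero {F : Type*} [NormedAddCommGroup F] [NormedSpace ℂ F] [CompleteSpace F]
    {d : ℕ} {G : (Fin d → ℂ) → F} {c : Fin d → ℂ} {r : ℝ} (hr : 0 < r)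
    (hG : DifferentiableOn ℂ G (Metric.ball c r))
    {s : Fin d → Set ℂ} (hs : ∀ j, s j ⊆ Metric.ball (c j) r)
    {p : Fin d → ℂ} (hp : ∀ j, p j ∈ Metric.ball (c j) r)
    (hacc : ∀ j, ∃ᶠ w in nhdsWithin (p j) {p j}ᶜ, w ∈ s j)
    (hz : ∀ z : Fin d → ℂ, (∀ j, z j ∈ s j) → G z = 0) :
    ∀ z : Fin d → ℂ, (∀ j, z j ∈ Metric.ball (c j) r) → G z = 0 := by
  suffices H : ∀ k : ℕ, ∀ z : Fin d → ℂ, (∀ j, z j ∈ Metric.ball (c j) r) →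
      (∀ j : Fin d, k ≤ (j : ℕ) → z j ∈ s j) → G z = 0 by
    intro z hball
    exact H d z hball (fun j hj => absurd j.isLt (by omega))
  intro k
  induction k with
  | zero => exact fun z hball hzs => hz z (fun j => hzs j (Nat.zero_le _))
  | succ k ih =>
    intro z hball hzs
    by_cases hk : k < d
    · set kk : Fin d := ⟨k, hk⟩ with hkk
      have hupd : ∀ w : ℂ, w ∈ Metric.ball (c kk) r →
          Function.update z kk w ∈ Metric.ball c r := by
        intro w hw
        rw [Metric.mem_ball, dist_pi_lt_iff hr]
        intro j
        rcases eq_or_ne j kk with h | h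
        · subst h; simpa using hw
        · rw [Function.update_of_ne h]
          exact hball j
      have hdiff : DifferentiableOn ℂ (fun w => G (Function.update z kk w))
          (Metric.ball (c kk) r) := by
        intro w hw
        exact ((hG _ (hupd w hw)).comp w
          ((hasFDerivAt_update z w).differentiableAt.differentiableWithinAt)
          (fun u hu => hupd u hu))
      have hana := hdiff.analyticOnNhd Metric.isOpen_ball
      have hzero : ∀ w ∈ s kk, G (Function.update z kk w) = 0 := by
        intro w hw
        refine ih (Function.update z kk w) (fun j => ?_) (fun j hj => ?_)
        · rcases eq_or_ne j kk with h | h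
          · subst h; simpa using hs kk hw
          · rw [Function.update_of_ne h]; exact hball j
        · rcases eq_or_ne j kk with h | h
          · subst h; simpa using hw
          · rw [Function.update_of_ne h]
            refine hzs j ?_
            have : (j : ℕ) ≠ k := fun hc => h (Fin.ext hc)
            omega
      have hfreq : ∃ᶠ w in nhdsWithin (p kk) {p kk}ᶜ,
          (fun w => G (Function.update z kk w)) w = 0 :=
        (hacc kk).mono (fun w hw => hzero w hw)
      have hEq := hana.eqOn_zero_of_preconnected_of_frequently_eq_zero
        ((convex_ball _ _).isPreconnected) (hp kk) hfreq
      have hzk := hEq (hball kk)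
      simpa [Function.update_eq_self] using hzk
    · exact ih z hball (fun j hj => hzs j (by have := j.isLt; omega))

/-- Splitting of `V n` as `ℂ^m` adapted to a complex structure `K`. -/
lemma exists_phi (n : ℕ) (K : EndE n) (hK : K * K = -1) :
    ∃ (m : ℕ) (φ : V n ≃ₗ[ℝ] (Fin m → ℂ)), Continuous φ ∧
      ∀ v, φ (K v) = Complex.I • φ v := by
  letI smulC : SMul ℂ (V n) := ⟨fun z v => z.re • v + z.im • K v⟩
  have hsmul : ∀ (z : ℂ) (v : V n), z • v = z.re • v + z.im • K v := fun z v => rfl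
  letI modC : Module ℂ (V n) := Module.ofMinimalAxioms
    (fun z x y => by simp [hsmul, smul_add, map_add]; module)
    (fun z w x => by simp [hsmul, Complex.add_re, Complex.add_im, add_smul]; module)
    (fun z w x => by
      simp only [hsmul, Complex.mul_re, Complex.mul_im, map_add, map_smul,
        sq_neg_one_apply hK, add_smul, sub_smul, smul_add, smul_smul, smul_neg]
      module)
    (fun x => by simp [hsmul])
  letI : IsScalarTower ℝ ℂ (V n) := ⟨fun r z v => by
    simp [hsmul, Complex.real_smul, smul_smul, smul_add]⟩
  letI : Module.Finite ℂ (V n) := Module.Finite.of_restrictScalars_finite ℝ ℂ (V n)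
  classical
  set m := Module.finrank ℂ (V n) with hm
  let b : Module.Basis (Fin m) ℂ (V n) := Module.finBasis ℂ (V n)
  let φℂ : V n ≃ₗ[ℂ] (Fin m → ℂ) := b.equivFun
  let φ : V n ≃ₗ[ℝ] (Fin m → ℂ) := φℂ.restrictScalars ℝ
  refine ⟨m, φ, ?_, ?_⟩
  · exact LinearMap.continuous_of_finiteDimensional (φ.toLinearMap)
  · intro v
    have hKv : K v = (Complex.I : ℂ) • v := by
      simp [hsmul]
    show φℂ (K v) = Complex.I • φℂ v
    rw [hKv, map_smul]

/-- A continuous real-linear map from `ℂ^d` commuting with `i` on basis vectors is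
the restriction of a continuous ℂ-linear map. -/
lemma exists_clinear {d : ℕ} {F : Type*} [NormedAddCommGroup F] [NormedSpace ℂ F]
    (D : (Fin d → ℂ) →L[ℝ] F)
    (hD : ∀ j, D (Pi.single j Complex.I) = Complex.I • D (Pi.single j 1)) :
    ∃ L : (Fin d → ℂ) →L[ℂ] F, L.restrictScalars ℝ = D := by
  classical
  refine ⟨∑ j, (ContinuousLinearMap.proj j : (Fin d → ℂ) →L[ℂ] ℂ).smulRight
      (D (Pi.single j 1)), ?_⟩
  apply ContinuousLinearMap.coe_injective
  apply Module.Basis.ext (Pi.basis fun _ : Fin d => Complex.basisOneI)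
  rintro ⟨j, i⟩
  have hb : (Pi.basis fun _ : Fin d => Complex.basisOneI) ⟨j, i⟩ =
      Pi.single j (Complex.basisOneI i) := by
    simp [Pi.basis_apply]
  have key : ∀ c : ℂ,
      (∑ k, (ContinuousLinearMap.proj k : (Fin d → ℂ) →L[ℂ] ℂ).smulRight
        (D (Pi.single k 1))) (Pi.single j c) = c • D (Pi.single j 1) := by
    intro c
    rw [ContinuousLinearMap.sum_apply]
    rw [Finset.sum_eq_single j]
    · simp
    · intro k _ hk
      simp [Pi.single_apply, hk]
    · simp
  rw [hb]
  fin_cases i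
  · simpa using key 1
  · simp only [ContinuousLinearMap.coe_coe, ContinuousLinearMap.coe_restrictScalars']
    show _ = D (Pi.single j (Complex.basisOneI 1))
    simp only [Complex.coe_basisOneI]
    rw [show (![1, Complex.I] 1) = Complex.I from rfl]
    rw [hD j]
    exact key Complex.I

end Auxiliary

set_option maxHeartbeats 2000000 in
/-- (Classical Path-representation Formula) For I, J₁, J₂ ∈ 𝒞(γ, Ω) with J₁ − J₂
invertible and f weak slice regular on the slice-open set Ω:
f(γ^I(t)) = (I − J₂)((J₁ − J₂)⁻¹ f(γ^{J₁}(t))) − (I − J₁)((J₁ − J₂)⁻¹ f(γ^{J₂}(t))). -/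
theorem classical_path_representation_formula (n d : ℕ) (hn : 1 ≤ n) (hd : 1 ≤ d)
    (𝒞 : Set (EndE n)) (h𝒞 : 𝒞.Nonempty) (hsym : ∀ I ∈ 𝒞, -I ∈ 𝒞) (hcs : 𝒞 ⊆ CS n)
    (Ω : Set (Fin d → EndE n)) (hΩ : SliceOpen n d 𝒞 Ω)
    (f : (Fin d → EndE n) → V n) (hf : WSRegular n d 𝒞 Ω f)
    (γ : ℝ → Fin d → ℂ) (hγ : IsPath0 d γ)
    (I J₁ J₂ : EndE n) (hI : I ∈ CPath n d 𝒞 Ω γ)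
    (hJ₁ : J₁ ∈ CPath n d 𝒞 Ω γ) (hJ₂ : J₂ ∈ CPath n d 𝒞 Ω γ)
    (hinv : IsUnit (J₁ - J₂)) :
    ∀ t ∈ Set.Icc (0:ℝ) 1,
      f (Psi n d I (γ t)) =
        (I - J₂) (Ring.inverse (J₁ - J₂) (f (Psi n d J₁ (γ t)))) -
        (I - J₁) (Ring.inverse (J₁ - J₂) (f (Psi n d J₂ (γ t)))) := by
  classical
  obtain ⟨hI𝒞, hIpath⟩ := hI
  obtain ⟨hJ₁𝒞, hJ₁path⟩ := hJ₁
  obtain ⟨hJ₂𝒞, hJ₂path⟩ := hJ₂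
  have hII : I * I = -1 := hcs hI𝒞
  have hJJ₁ : J₁ * J₁ = -1 := hcs hJ₁𝒞
  have hJJ₂ : J₂ * J₂ = -1 := hcs hJ₂𝒞
  set A : EndE n := J₁ - J₂ with hA
  set Binv : EndE n := Ring.inverse A with hBinvdef
  have hABinv : ∀ v : V n, A (Binv v) = v := by
    intro v
    have : A * Binv = 1 := Ring.mul_inverse_cancel A hinv
    have := congrArg (fun T : EndE n => T v) this
    simpa [mul_apply'] using this
  have hBinvA : ∀ v : V n, Binv (A v) = v := by
    intro v
    have : Binv * A = 1 := Ring.inverse_mul_cancel A hinv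
    have := congrArg (fun T : EndE n => T v) this
    simpa [mul_apply'] using this
  -- open preimages
  have hPhiCont : ∀ K : EndE n, Continuous (Phi n d K) := by
    intro K
    refine continuous_pi fun ℓ => ?_
    exact (((continuous_apply ℓ).comp continuous_fst).smul continuous_const).add
      (((continuous_apply ℓ).comp continuous_snd).smul continuous_const)
  have hopen : ∀ K, K ∈ 𝒞 → IsOpen (Phi n d K ⁻¹' Ω) := by
    intro K hK
    obtain ⟨U, hUopen, hUeq⟩ := hΩ.2 K hK
    have hCId : ∀ p : (Fin d → ℝ) × (Fin d → ℝ), Phi n d K p ∈ CId n d K :=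
      fun p ℓ => ⟨p.1 ℓ, p.2 ℓ, rfl⟩
    have hpre : Phi n d K ⁻¹' Ω = Phi n d K ⁻¹' U := by
      ext p
      constructor
      · intro hp
        have hmem : Phi n d K p ∈ Ω ∩ CId n d K := ⟨hp, hCId p⟩
        rw [hUeq] at hmem; exact hmem.1
      · intro hp
        have hmem : Phi n d K p ∈ U ∩ CId n d K := ⟨hp, hCId p⟩
        rw [← hUeq] at hmem; exact hmem.1
    rw [hpre]
    exact hUopen.preimage (hPhiCont K)
  have hdiffAt : ∀ K, K ∈ 𝒞 → ∀ p, p ∈ Phi n d K ⁻¹' Ω →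
      DifferentiableAt ℝ (f ∘ Phi n d K) p :=
    fun K hK p hp => (hf K hK).1.differentiableAt ((hopen K hK).mem_nhds hp)
  -- the auxiliary functions
  set bfun : ((Fin d → ℝ) × (Fin d → ℝ)) → V n :=
    fun p => Binv ((f ∘ Phi n d J₁) p - (f ∘ Phi n d J₂) p) with hbfun
  set afun : ((Fin d → ℝ) × (Fin d → ℝ)) → V n :=
    fun p => (f ∘ Phi n d J₁) p - J₁ (bfun p) with hafun
  set gfun : ((Fin d → ℝ) × (Fin d → ℝ)) → V n :=
    fun p => (f ∘ Phi n d I) p - afun p - I (bfun p) with hgfun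
  have hAb : ∀ p, J₁ (bfun p) - J₂ (bfun p) = (f ∘ Phi n d J₁) p - (f ∘ Phi n d J₂) p := by
    intro p
    have h := hABinv ((f ∘ Phi n d J₁) p - (f ∘ Phi n d J₂) p)
    rw [hA, ContinuousLinearMap.sub_apply] at h
    exact h
  have hafun' : afun = fun p => (f ∘ Phi n d J₂) p - J₂ (bfun p) := by
    funext p
    have e : afun p - ((f ∘ Phi n d J₂) p - J₂ (bfun p)) =
        ((f ∘ Phi n d J₁) p - (f ∘ Phi n d J₂) p) - (J₁ (bfun p) - J₂ (bfun p)) := by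
      rw [hafun]; exact sub_sub_sub_comm _ _ _ _
    rw [hAb p, sub_self] at e
    exact sub_eq_zero.mp e
  -- derivative and Cauchy-Riemann relations for gfun
  have hmaster : ∀ p ∈ (Phi n d I ⁻¹' Ω) ∩ ((Phi n d J₁ ⁻¹' Ω) ∩ (Phi n d J₂ ⁻¹' Ω)),
      ∃ D : ((Fin d → ℝ) × (Fin d → ℝ)) →L[ℝ] V n,
        HasFDerivAt gfun D p ∧ ∀ ℓ, D (ex d ℓ) + I (D (ey d ℓ)) = 0 := by
    rintro p ⟨hpI, hp1, hp2⟩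
    have hdI := (hdiffAt I hI𝒞 p hpI).hasFDerivAt
    have hd1 := (hdiffAt J₁ hJ₁𝒞 p hp1).hasFDerivAt
    have hd2 := (hdiffAt J₂ hJ₂𝒞 p hp2).hasFDerivAt
    set DI := fderiv ℝ (f ∘ Phi n d I) p with hDI
    set D₁ := fderiv ℝ (f ∘ Phi n d J₁) p with hD₁
    set D₂ := fderiv ℝ (f ∘ Phi n d J₂) p with hD₂
    set Db : ((Fin d → ℝ) × (Fin d → ℝ)) →L[ℝ] V n := Binv.comp (D₁ - D₂) with hDb
    have hb : HasFDerivAt bfun Db p := by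
      have h := Binv.hasFDerivAt.comp p (hd1.sub hd2)
      simpa [hbfun, Function.comp_def, hDb] using h
    have ha : HasFDerivAt afun (D₁ - J₁.comp Db) p :=
      hd1.sub (J₁.hasFDerivAt.comp p hb)
    have ha2 : HasFDerivAt afun (D₂ - J₂.comp Db) p := by
      rw [hafun']
      exact hd2.sub (J₂.hasFDerivAt.comp p hb)
    have huniq : D₁ - J₁.comp Db = D₂ - J₂.comp Db := ha.unique ha2
    refine ⟨DI - (D₁ - J₁.comp Db) - I.comp Db,
      (hdI.sub ha).sub (I.hasFDerivAt.comp p hb), ?_⟩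
    intro ℓ
    have cr1 := (hf J₁ hJ₁𝒞).2 p hp1 ℓ
    have cr2 := (hf J₂ hJ₂𝒞).2 p hp2 ℓ
    have crI := (hf I hI𝒞).2 p hpI ℓ
    rw [← hD₁] at cr1
    rw [← hD₂] at cr2
    rw [← hDI] at crI
    have hJ1b2 : J₁ (J₁ (Db (ey d ℓ))) = -(Db (ey d ℓ)) := sq_neg_one_apply hJJ₁ _
    have hJ2b2 : J₂ (J₂ (Db (ey d ℓ))) = -(Db (ey d ℓ)) := sq_neg_one_apply hJJ₂ _
    have hx : D₁ (ex d ℓ) - J₁ (Db (ex d ℓ)) = D₂ (ex d ℓ) - J₂ (Db (ex d ℓ)) := by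
      have h := congrArg (fun T : ((Fin d → ℝ) × (Fin d → ℝ)) →L[ℝ] V n => T (ex d ℓ)) huniq
      simpa [ContinuousLinearMap.sub_apply, ContinuousLinearMap.comp_apply] using h
    have hy : D₁ (ey d ℓ) - J₁ (Db (ey d ℓ)) = D₂ (ey d ℓ) - J₂ (Db (ey d ℓ)) := by
      have h := congrArg (fun T : ((Fin d → ℝ) × (Fin d → ℝ)) →L[ℝ] V n => T (ey d ℓ)) huniq
      simpa [ContinuousLinearMap.sub_apply, ContinuousLinearMap.comp_apply] using h
    have hx' : J₁ (Db (ex d ℓ)) - J₂ (Db (ex d ℓ)) = D₁ (ex d ℓ) - D₂ (ex d ℓ) := by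
      have e : (D₁ (ex d ℓ) - J₁ (Db (ex d ℓ))) - (D₂ (ex d ℓ) - J₂ (Db (ex d ℓ))) =
          (D₁ (ex d ℓ) - D₂ (ex d ℓ)) - (J₁ (Db (ex d ℓ)) - J₂ (Db (ex d ℓ))) := by abel
      rw [hx, sub_self] at e
      exact (sub_eq_zero.mp e.symm).symm
    have e1 : J₁ (Db (ex d ℓ) + (D₁ (ey d ℓ) - J₁ (Db (ey d ℓ)))) =
        J₁ (Db (ex d ℓ)) + (J₁ (D₁ (ey d ℓ)) + Db (ey d ℓ)) := by
      rw [map_add, map_sub, hJ1b2]; abel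
    have e2 : J₂ (Db (ex d ℓ) + (D₁ (ey d ℓ) - J₁ (Db (ey d ℓ)))) =
        J₂ (Db (ex d ℓ)) + (J₂ (D₂ (ey d ℓ)) + Db (ey d ℓ)) := by
      rw [hy, map_add, map_sub, hJ2b2]; abel
    have key1 : A (Db (ex d ℓ) + (D₁ (ey d ℓ) - J₁ (Db (ey d ℓ)))) = 0 := by
      rw [hA, ContinuousLinearMap.sub_apply, e1, e2]
      have efin : J₁ (Db (ex d ℓ)) + (J₁ (D₁ (ey d ℓ)) + Db (ey d ℓ)) -
          (J₂ (Db (ex d ℓ)) + (J₂ (D₂ (ey d ℓ)) + Db (ey d ℓ))) =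
          (D₁ (ex d ℓ) + J₁ (D₁ (ey d ℓ))) - (D₂ (ex d ℓ) + J₂ (D₂ (ey d ℓ))) +
            ((J₁ (Db (ex d ℓ)) - J₂ (Db (ex d ℓ))) - (D₁ (ex d ℓ) - D₂ (ex d ℓ))) := by abel
      rw [efin, cr1, cr2, hx', sub_self]
      simp
    have key2 : Db (ex d ℓ) + (D₁ (ey d ℓ) - J₁ (Db (ey d ℓ))) = 0 := by
      have h := hBinvA (Db (ex d ℓ) + (D₁ (ey d ℓ) - J₁ (Db (ey d ℓ))))
      rw [key1, map_zero] at h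
      exact h.symm
    have key2I : I (Db (ex d ℓ)) + (I (D₁ (ey d ℓ)) - I (J₁ (Db (ey d ℓ)))) = 0 := by
      have h := congrArg (fun v : V n => I v) key2
      simpa [map_add, map_sub] using h
    have hsum : J₁ (Db (ex d ℓ)) + (J₁ (D₁ (ey d ℓ)) + Db (ey d ℓ)) = 0 := by
      rw [← e1, key2, map_zero]
    have key3 : D₁ (ex d ℓ) - J₁ (Db (ex d ℓ)) - Db (ey d ℓ) = 0 := by
      have e : D₁ (ex d ℓ) - J₁ (Db (ex d ℓ)) - Db (ey d ℓ) =
          (D₁ (ex d ℓ) + J₁ (D₁ (ey d ℓ))) -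
            (J₁ (Db (ex d ℓ)) + (J₁ (D₁ (ey d ℓ)) + Db (ey d ℓ))) := by abel
      rw [e, cr1, hsum, sub_self]
    simp only [ContinuousLinearMap.sub_apply, ContinuousLinearMap.comp_apply]
    have eI : I (DI (ey d ℓ) - (D₁ (ey d ℓ) - J₁ (Db (ey d ℓ))) - I (Db (ey d ℓ))) =
        I (DI (ey d ℓ)) - (I (D₁ (ey d ℓ)) - I (J₁ (Db (ey d ℓ)))) + Db (ey d ℓ) := by
      rw [map_sub, map_sub, map_sub, sq_neg_one_apply hII]; abel
    rw [eI]
    have efin2 : DI (ex d ℓ) - (D₁ (ex d ℓ) - J₁ (Db (ex d ℓ))) - I (Db (ex d ℓ)) +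
        (I (DI (ey d ℓ)) - (I (D₁ (ey d ℓ)) - I (J₁ (Db (ey d ℓ)))) + Db (ey d ℓ)) =
        (DI (ex d ℓ) + I (DI (ey d ℓ))) -
          (D₁ (ex d ℓ) - J₁ (Db (ex d ℓ)) - Db (ey d ℓ)) -
          (I (Db (ex d ℓ)) + (I (D₁ (ey d ℓ)) - I (J₁ (Db (ey d ℓ))))) := by abel
    rw [efin2, crI, key3, key2I, sub_zero, sub_zero]
  -- complexification
  set ιL : (Fin d → ℂ) →L[ℝ] ((Fin d → ℝ) × (Fin d → ℝ)) :=
    (ContinuousLinearMap.pi fun j => Complex.reCLM.comp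
      (ContinuousLinearMap.proj (R := ℝ) (φ := fun _ : Fin d => ℂ) j)).prod
    (ContinuousLinearMap.pi fun j => Complex.imCLM.comp
      (ContinuousLinearMap.proj (R := ℝ) (φ := fun _ : Fin d => ℂ) j)) with hιL
  have hι1 : ∀ z : Fin d → ℂ, (ιL z).1 = fun j => (z j).re := fun z => rfl
  have hι2 : ∀ z : Fin d → ℂ, (ιL z).2 = fun j => (z j).im := fun z => rfl
  have hPsiPhi : ∀ (K : EndE n) (z : Fin d → ℂ), Phi n d K (ιL z) = Psi n d K z := by
    intro K z; funext ℓ; rfl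
  set Efull : Set ((Fin d → ℝ) × (Fin d → ℝ)) :=
    (Phi n d I ⁻¹' Ω) ∩ ((Phi n d J₁ ⁻¹' Ω) ∩ (Phi n d J₂ ⁻¹' Ω)) with hEfull
  have hEopen : IsOpen Efull :=
    (hopen I hI𝒞).inter ((hopen J₁ hJ₁𝒞).inter (hopen J₂ hJ₂𝒞))
  set E' : Set (Fin d → ℂ) := ιL ⁻¹' Efull with hE'
  have hE'open : IsOpen E' := hEopen.preimage ιL.continuous
  have hγE' : ∀ t ∈ Set.Icc (0:ℝ) 1, γ t ∈ E' := by
    intro t ht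
    refine ⟨?_, ?_, ?_⟩ <;> simp only [Set.mem_preimage, hPsiPhi]
    · exact hIpath t ht
    · exact hJ₁path t ht
    · exact hJ₂path t ht
  obtain ⟨m, φ, hφcont, hφI⟩ := exists_phi n I hII
  set φL : V n →L[ℝ] (Fin m → ℂ) := ⟨φ.toLinearMap, hφcont⟩ with hφL
  have hφLapp : ∀ v, φL v = φ v := fun v => rfl
  set G : (Fin d → ℂ) → (Fin m → ℂ) := fun z => φ (gfun (ιL z)) with hG
  have hsingle1 : ∀ j : Fin d, ιL (Pi.single j (1:ℂ)) = ex d j := by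
    intro j
    refine Prod.ext ?_ ?_ <;> funext k <;>
      simp [hι1, hι2, ex, Pi.single_apply, apply_ite Complex.re, apply_ite Complex.im]
  have hsingleI : ∀ j : Fin d, ιL (Pi.single j Complex.I) = ey d j := by
    intro j
    refine Prod.ext ?_ ?_ <;> funext k <;>
      simp [hι1, hι2, ey, Pi.single_apply, apply_ite Complex.re, apply_ite Complex.im]
  have hGdiff : DifferentiableOn ℂ G E' := by
    intro z hz
    obtain ⟨D, hD, hCR⟩ := hmaster (ιL z) hz
    have hreal : HasFDerivAt G ((φL.comp D).comp ιL) z := by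
      have h := (φL.hasFDerivAt.comp (ιL z) hD).comp z ιL.hasFDerivAt
      simpa [hG, Function.comp_def, hφLapp] using h
    have hcond : ∀ j, ((φL.comp D).comp ιL) (Pi.single j Complex.I) =
        Complex.I • ((φL.comp D).comp ιL) (Pi.single j 1) := by
      intro j
      simp only [ContinuousLinearMap.comp_apply, hsingle1 j, hsingleI j]
      have hDey : D (ey d j) = I (D (ex d j)) := by
        have h := congrArg (fun v : V n => I v) (hCR j)
        simp only [map_add, map_zero, sq_neg_one_apply hII] at h
        have h2 : I (D (ex d j)) - D (ey d j) = 0 := by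
          rw [← h]; abel
        exact (sub_eq_zero.mp h2).symm
      rw [hDey, hφLapp, hφLapp, hφI]
    obtain ⟨L, hL⟩ := exists_clinear ((φL.comp D).comp ιL) hcond
    exact (hasFDerivAt_of_restrictScalars ℝ hreal hL).differentiableAt.differentiableWithinAt
  -- gfun vanishes at real points
  have hsamePt : ∀ (K K' : EndE n) (x : Fin d → ℝ),
      Phi n d K (x, (0 : Fin d → ℝ)) = Phi n d K' (x, 0) := by
    intro K K' x; funext ℓ
    show x ℓ • 1 + (0:Fin d → ℝ) ℓ • K = x ℓ • 1 + (0:Fin d → ℝ) ℓ • K'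
    ext v
    simp
  have hg0 : ∀ x : Fin d → ℝ, gfun (x, 0) = 0 := by
    intro x
    have hb0 : bfun (x, 0) = 0 := by
      rw [hbfun]
      simp only [Function.comp_apply, hsamePt J₁ J₂ x, sub_self, map_zero]
    rw [hgfun]
    simp only [hafun, Function.comp_apply, hb0, map_zero, sub_zero]
    rw [hsamePt I J₁ x]
    abel
  -- the set of good times
  set Agood : Set ℝ := {t | t ∈ Set.Icc (0:ℝ) 1 ∧ ∃ ε, 0 < ε ∧ Metric.ball (γ t) ε ⊆ E' ∧
      ∀ z ∈ Metric.ball (γ t) ε, G z = 0} with hAgood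
  have hradius : ∀ t ∈ Set.Icc (0:ℝ) 1, ∃ R, 0 < R ∧ Metric.ball (γ t) R ⊆ E' := by
    intro t ht
    obtain ⟨R, hR, hsub⟩ := Metric.isOpen_iff.mp hE'open (γ t) (hγE' t ht)
    exact ⟨R, hR, hsub⟩
  have hfreq_ball : ∀ (w : Fin d → ℂ) (j : Fin d) (ε : ℝ), 0 < ε →
      ∃ᶠ u in nhdsWithin (w j) {w j}ᶜ, u ∈ Metric.ball (w j) ε := by
    intro w j ε hε
    have hev : ∀ᶠ u in nhdsWithin (w j) {w j}ᶜ, u ∈ Metric.ball (w j) ε :=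
      Filter.eventually_of_mem
        (mem_nhdsWithin_of_mem_nhds (Metric.ball_mem_nhds _ hε)) (fun u hu => hu)
    exact hev.frequently
  have claimC : ∀ t ∈ Set.Icc (0:ℝ) 1, ∀ R, 0 < R → Metric.ball (γ t) R ⊆ E' →
      (∃ σ, σ ∈ Agood ∧ dist (γ σ) (γ t) < R / 2) → t ∈ Agood := by
    rintro t ht R hR hRsub ⟨σ, ⟨hσIcc, ε, hε, hεsub, hεzero⟩, hdistσ⟩
    refine ⟨ht, R, hR, hRsub, ?_⟩
    set ε' := min ε (R/2) with hε'def
    have hε'pos : 0 < ε' := lt_min hε (by linarith)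
    have hzero : ∀ z : Fin d → ℂ, (∀ j, z j ∈ Metric.ball (γ σ j) ε') → G z = 0 := by
      intro z hj
      apply hεzero
      have hlt : dist z (γ σ) < ε' := (dist_pi_lt_iff hε'pos).mpr (fun j => hj j)
      exact Metric.mem_ball.mpr (lt_of_lt_of_le hlt (min_le_left _ _))
    have hsub : ∀ j, Metric.ball (γ σ j) ε' ⊆ Metric.ball (γ t j) R := by
      intro j u hu
      rw [Metric.mem_ball] at hu ⊢
      have h1 : dist (γ σ j) (γ t j) ≤ dist (γ σ) (γ t) := dist_le_pi_dist _ _ j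
      have h2 : ε' ≤ R/2 := min_le_right _ _
      calc dist u (γ t j) ≤ dist u (γ σ j) + dist (γ σ j) (γ t j) := dist_triangle _ _ _
        _ < R := by linarith
    have hp : ∀ j, γ σ j ∈ Metric.ball (γ t j) R := by
      intro j
      have h1 : dist (γ σ j) (γ t j) ≤ dist (γ σ) (γ t) := dist_le_pi_dist _ _ j
      exact Metric.mem_ball.mpr (by linarith)
    have hspread := spread_zero hR (hGdiff.mono hRsub)
      (s := fun j => Metric.ball (γ σ j) ε') hsub (p := γ σ) hp
      (fun j => hfreq_ball (γ σ) j ε' hε'pos) hzero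
    intro z hz
    exact hspread z ((dist_pi_lt_iff hR).mp (Metric.mem_ball.mp hz))
  -- 0 is a good time
  have h0Icc : (0:ℝ) ∈ Set.Icc (0:ℝ) 1 := ⟨le_refl 0, by norm_num⟩
  have h0A : (0:ℝ) ∈ Agood := by
    obtain ⟨R, hR, hRsub⟩ := hradius 0 h0Icc
    refine ⟨h0Icc, R, hR, hRsub, ?_⟩
    have hzero : ∀ z : Fin d → ℂ,
        (∀ j, z j ∈ {u : ℂ | u.im = 0 ∧ u ∈ Metric.ball (γ 0 j) R}) → G z = 0 := by
      intro z hj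
      have him : (fun j => (z j).im) = (0 : Fin d → ℝ) := funext fun j => (hj j).1
      have hιz : ιL z = ((fun j => (z j).re), (0:Fin d → ℝ)) := by
        refine Prod.ext ?_ ?_
        · exact hι1 z
        · rw [hι2 z, him]
      show φ (gfun (ιL z)) = 0
      rw [hιz, hg0, map_zero]
    have hacc : ∀ j, ∃ᶠ u in nhdsWithin (γ 0 j) {γ 0 j}ᶜ,
        u ∈ {u : ℂ | u.im = 0 ∧ u ∈ Metric.ball (γ 0 j) R} := by
      intro j
      rw [Filter.frequently_iff]
      intro U hU
      rw [Metric.mem_nhdsWithin_iff] at hU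
      obtain ⟨δ, hδ, hδsub⟩ := hU
      set s : ℝ := min δ R / 2 with hsdef
      have hminpos : 0 < min δ R := lt_min hδ hR
      have hspos : 0 < s := by rw [hsdef]; linarith
      have hsδ : s < δ := by
        have := min_le_left δ R; rw [hsdef]; linarith
      have hsR : s < R := by
        have := min_le_right δ R; rw [hsdef]; linarith
      have hdist : dist (γ 0 j + (s:ℂ)) (γ 0 j) = s := by
        rw [Complex.dist_eq]
        simp [abs_of_pos hspos, add_sub_cancel_left]
      refine ⟨γ 0 j + (s:ℂ), hδsub ⟨?_, ?_⟩, ?_, ?_⟩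
      · rw [Metric.mem_ball, hdist]; exact hsδ
      · simp only [Set.mem_compl_iff, Set.mem_singleton_iff]
        intro hcon
        have : (s:ℂ) = 0 := by
          have := congrArg (fun u => u - γ 0 j) hcon
          simpa using this
        rw [Complex.ofReal_eq_zero] at this
        exact hspos.ne' this
      · simp [Complex.add_im, hγ.2 j]
      · rw [Metric.mem_ball, hdist]; exact hsR
    have hspread := spread_zero hR (hGdiff.mono hRsub)
      (s := fun j => {u : ℂ | u.im = 0 ∧ u ∈ Metric.ball (γ 0 j) R})
      (fun j u hu => hu.2) (p := γ 0) (fun j => Metric.mem_ball_self hR) hacc hzero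
    intro z hz
    exact hspread z ((dist_pi_lt_iff hR).mp (Metric.mem_ball.mp hz))
  -- modulus of continuity of γ
  have hγcont : ∀ t ∈ Set.Icc (0:ℝ) 1, ∀ ε, 0 < ε → ∃ δ, 0 < δ ∧ ∀ s ∈ Set.Icc (0:ℝ) 1,
      dist s t < δ → dist (γ s) (γ t) < ε := by
    intro t ht ε hε
    have hc := hγ.1 t ht
    rw [Metric.continuousWithinAt_iff] at hc
    obtain ⟨δ, hδ, hδ'⟩ := hc ε hε
    exact ⟨δ, hδ, fun s hs hst => hδ' hs hst⟩
  have hclosure : ∀ t ∈ Set.Icc (0:ℝ) 1, (∀ δ, 0 < δ → ∃ σ ∈ Agood, dist σ t < δ) →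
      t ∈ Agood := by
    intro t ht hcl
    obtain ⟨R, hR, hRsub⟩ := hradius t ht
    obtain ⟨δ, hδ, hδ'⟩ := hγcont t ht (R/2) (by linarith)
    obtain ⟨σ, hσA, hσd⟩ := hcl δ hδ
    exact claimC t ht R hR hRsub ⟨σ, hσA, hδ' σ hσA.1 hσd⟩
  have hopenA : ∀ u ∈ Agood, ∃ δ, 0 < δ ∧ ∀ t ∈ Set.Icc (0:ℝ) 1, dist t u < δ → t ∈ Agood := by
    rintro u ⟨huIcc, ε, hε, hεsub, hεzero⟩
    obtain ⟨δ, hδ, hδ'⟩ := hγcont u huIcc (ε/4) (by linarith)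
    refine ⟨δ, hδ, ?_⟩
    intro t ht htu
    have hdistγ : dist (γ t) (γ u) < ε/4 := hδ' t ht htu
    have hRsub : Metric.ball (γ t) (ε/2) ⊆ E' := by
      intro z hz
      apply hεsub
      rw [Metric.mem_ball] at hz ⊢
      calc dist z (γ u) ≤ dist z (γ t) + dist (γ t) (γ u) := dist_triangle _ _ _
        _ < ε := by linarith
    apply claimC t ht (ε/2) (by linarith) hRsub
    refine ⟨u, ⟨huIcc, ε, hε, hεsub, hεzero⟩, ?_⟩
    rw [dist_comm] at hdistγ
    linarith
  -- propagation along the whole interval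
  have hAll : ∀ τ ∈ Set.Icc (0:ℝ) 1, τ ∈ Agood := by
    intro τ hτ
    set B : Set ℝ := {t | t ∈ Set.Icc (0:ℝ) τ ∧ Set.Icc (0:ℝ) t ⊆ Agood} with hB
    have h0B : (0:ℝ) ∈ B := by
      refine ⟨⟨le_refl 0, hτ.1⟩, ?_⟩
      intro s hs
      have hs0 : s = 0 := le_antisymm hs.2 hs.1
      rw [hs0]; exact h0A
    have hBne : B.Nonempty := ⟨0, h0B⟩
    have hBbdd : BddAbove B := ⟨τ, fun t htB => htB.1.2⟩
    set u := sSup B with hu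
    have hu0 : 0 ≤ u := le_csSup hBbdd h0B
    have huτ : u ≤ τ := csSup_le hBne (fun t htB => htB.1.2)
    have huIcc : u ∈ Set.Icc (0:ℝ) 1 := ⟨hu0, huτ.trans hτ.2⟩
    have hsubA : ∀ s, 0 ≤ s → s < u → s ∈ Agood := by
      intro s hs0 hsu
      obtain ⟨b, hbB, hsb⟩ := exists_lt_of_lt_csSup hBne hsu
      exact hbB.2 ⟨hs0, hsb.le⟩
    have huA : u ∈ Agood := by
      apply hclosure u huIcc
      intro δ hδ
      rcases eq_or_lt_of_le hu0 with h0u | h0u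
      · refine ⟨0, h0A, ?_⟩
        rw [← h0u]
        simpa using hδ
      · set σ := max 0 (u - δ/2) with hσdef
        have hσ0 : 0 ≤ σ := le_max_left _ _
        have hσu : σ < u := by
          rw [hσdef]; apply max_lt h0u; linarith
        refine ⟨σ, hsubA σ hσ0 hσu, ?_⟩
        rw [Real.dist_eq, abs_sub_lt_iff]
        have hσlow : u - δ/2 ≤ σ := le_max_right _ _
        constructor <;> linarith
    have huB : Set.Icc (0:ℝ) u ⊆ Agood := by
      intro s hs
      rcases lt_or_eq_of_le hs.2 with h | h
      · exact hsubA s hs.1 h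
      · rw [h]; exact huA
    by_cases huτeq : u = τ
    · rw [← huτeq]; exact huA
    · exfalso
      have hulτ : u < τ := lt_of_le_of_ne huτ huτeq
      obtain ⟨δ, hδ, hδ'⟩ := hopenA u huA
      set t' := min τ (u + δ/2) with ht'def
      have ht'0 : 0 ≤ t' := le_min hτ.1 (by linarith)
      have ht'1 : t' ≤ 1 := (min_le_left _ _).trans hτ.2
      have ht'u : u < t' := lt_min hulτ (by linarith)
      have ht'δ : t' - u ≤ δ/2 := by
        have := min_le_right τ (u + δ/2)
        rw [ht'def]; linarith
      have ht'B : t' ∈ B := by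
        refine ⟨⟨ht'0, min_le_left _ _⟩, ?_⟩
        intro s hs
        rcases le_or_gt s u with hsu | hsu
        · exact huB ⟨hs.1, hsu⟩
        · apply hδ' s ⟨hs.1, hs.2.trans ht'1⟩
          rw [Real.dist_eq, abs_sub_lt_iff]
          constructor <;> linarith [hs.2]
      have : t' ≤ u := le_csSup hBbdd ht'B
      linarith
  -- conclusion: gfun vanishes along the path
  have hgzero : ∀ t ∈ Set.Icc (0:ℝ) 1, gfun (ιL (γ t)) = 0 := by
    intro t ht
    obtain ⟨_, ε, hε, _, hzero⟩ := hAll t ht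
    have h := hzero _ (Metric.mem_ball_self hε)
    apply φ.injective
    rw [map_zero]
    exact h
  -- final algebra
  intro t ht
  have h := hgzero t ht
  rw [hgfun, hafun, hbfun] at h
  simp only [Function.comp_apply, hPsiPhi] at h
  set v₁ := f (Psi n d J₁ (γ t)) with hv₁
  set v₂ := f (Psi n d J₂ (γ t)) with hv₂
  set w₁ := Binv v₁ with hw₁
  set w₂ := Binv v₂ with hw₂
  have hbw : Binv (v₁ - v₂) = w₁ - w₂ := map_sub Binv v₁ v₂
  rw [hbw] at h
  have hfIeq : f (Psi n d I (γ t)) = v₁ - J₁ (w₁ - w₂) + I (w₁ - w₂) := by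
    have e : f (Psi n d I (γ t)) - (v₁ - J₁ (w₁ - w₂) + I (w₁ - w₂)) =
        f (Psi n d I (γ t)) - (v₁ - J₁ (w₁ - w₂)) - I (w₁ - w₂) := by abel
    rw [h] at e
    exact sub_eq_zero.mp (by rw [← e])
  have hAw : J₁ w₁ - J₂ w₁ = v₁ := by
    have h2 := hABinv v₁
    rw [hA, ContinuousLinearMap.sub_apply] at h2
    exact h2
  rw [hfIeq]
  simp only [ContinuousLinearMap.sub_apply]
  rw [map_sub J₁ w₁ w₂, map_sub I w₁ w₂]
  rw [← sub_eq_zero]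
  have efin : v₁ - (J₁ w₁ - J₁ w₂) + (I w₁ - I w₂) - ((I w₁ - J₂ w₁) - (I w₂ - J₁ w₂)) =
      v₁ - (J₁ w₁ - J₂ w₁) := by abel
  rw [efin, hAw, sub_self]
end
end

section
/- Every weak slice regular function on a slice-open set in W is path-slice: if Ω is slice-open in W and f : Ω → ℝ^{2n} is weak slice regular, then there exist functions F₁, F₂ : 𝒫(ℂ^d, Ω) → ℝ^{2n} such that for every γ ∈ 𝒫(ℂ^d, Ω) and every I ∈ 𝒞(γ, Ω): f(γ^I(1)) = F₁(γ) + I(F₂(γ)). -/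
noncomputable section

open Set Metric Function

section Identity

/-- Identity lemma: a holomorphic function on a ball centered at a real point of `ℂ^d`
that vanishes at all real points of the ball vanishes identically. -/
lemma totallyReal_vanish {d : ℕ} {φ : (Fin d → ℂ) → ℂ} {c : Fin d → ℂ} {r : ℝ}
    (hc : ∀ ℓ, (c ℓ).im = 0)
    (hφ : DifferentiableOn ℂ φ (ball c r))
    (hreal : ∀ z ∈ ball c r, (∀ ℓ, (z ℓ).im = 0) → φ z = 0) :
    ∀ z ∈ ball c r, φ z = 0 := by
  have key : ∀ k : ℕ, ∀ z ∈ ball c r, (∀ ℓ : Fin d, k ≤ (ℓ : ℕ) → (z ℓ).im = 0) → φ z = 0 := by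
    intro k
    induction k with
    | zero => exact fun z hz h => hreal z hz fun ℓ => h ℓ (Nat.zero_le _)
    | succ k ih =>
      intro z hz hzre
      by_cases hk : k < d
      · set j : Fin d := ⟨k, hk⟩ with hj
        have hr : 0 < r := lt_of_le_of_lt dist_nonneg (mem_ball.mp hz)
        set m : ℂ → (Fin d → ℂ) := fun ζ => Function.update z j ζ with hm
        have hmem : ∀ ζ ∈ ball (c j) r, m ζ ∈ ball c r := by
          intro ζ hζ
          rw [mem_ball, dist_pi_lt_iff hr]
          intro ℓ
          rcases eq_or_ne ℓ j with h | h
          · subst h; simpa [m] using (mem_ball.mp hζ)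
          · rw [hm]
            simp only [Function.update_apply, if_neg h]
            exact lt_of_le_of_lt (dist_le_pi_dist z c ℓ) (mem_ball.mp hz)
        have hmz : m = fun ζ => Function.update z j 0 + ζ • Pi.single j 1 := by
          funext ζ ℓ
          rcases eq_or_ne ℓ j with h | h
          · subst h; simp [m]
          · simp [m, Function.update_apply, if_neg h, Pi.single_apply, h]
        have hdm : Differentiable ℂ m := by
          rw [hmz]
          exact (differentiable_const _).add (differentiable_id.smul_const _)
        have hud : DifferentiableOn ℂ (φ ∘ m) (ball (c j) r) :=
          hφ.comp hdm.differentiableOn fun ζ hζ => hmem ζ hζ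
        have han : AnalyticOnNhd ℂ (φ ∘ m) (ball (c j) r) := hud.analyticOnNhd isOpen_ball
        have hval : ∀ ζ ∈ ball (c j) r, ζ.im = 0 → (φ ∘ m) ζ = 0 := by
          intro ζ hζ hζim
          refine ih (m ζ) (hmem _ hζ) ?_
          intro ℓ hℓ
          rcases eq_or_ne ℓ j with h | h
          · subst h; simpa [m] using hζim
          · have hℓ' : k + 1 ≤ (ℓ : ℕ) := by
              rcases lt_or_eq_of_le hℓ with h' | h'
              · omega
              · exfalso; exact h (Fin.ext h'.symm)
            have : m ζ ℓ = z ℓ := by simp [m, Function.update_apply, if_neg h]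
            rw [this]; exact hzre ℓ hℓ'
        have hfreq : ∃ᶠ ζ in nhdsWithin (c j) {(c j)}ᶜ, (φ ∘ m) ζ = 0 := by
          rw [Filter.frequently_iff]
          intro S hS
          obtain ⟨ε, hε, hball⟩ := Metric.mem_nhdsWithin_iff.mp hS
          set t : ℝ := min (ε / 2) (r / 2) with hT
          have ht0 : 0 < t := lt_min (by linarith) (by linarith)
          have hdist : dist (c j + (t : ℂ)) (c j) = t := by
            rw [dist_eq_norm, add_sub_cancel_left, Complex.norm_real, Real.norm_eq_abs,
              abs_of_pos ht0]
          refine ⟨c j + (t : ℂ), hball ⟨?_, ?_⟩, ?_⟩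
          · rw [mem_ball, hdist]
            calc t ≤ ε / 2 := min_le_left _ _
              _ < ε := by linarith
          · simp only [Set.mem_compl_iff, Set.mem_singleton_iff]
            intro h
            have : (t : ℂ) = 0 := by
              have := congrArg (fun w => w - c j) h
              simpa using this
            exact ht0.ne' (by exact_mod_cast this)
          · refine hval _ ?_ ?_
            · rw [mem_ball, hdist]
              calc t ≤ r / 2 := min_le_right _ _
                _ < r := by linarith
            · simp [hc j]
        have heqz := han.eqOn_zero_of_preconnected_of_frequently_eq_zero
          (convex_ball (c j) r).isPreconnected (mem_ball_self hr) hfreq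
        have hzj : z j ∈ ball (c j) r :=
          lt_of_le_of_lt (dist_le_pi_dist z c j) (mem_ball.mp hz)
        have := heqz hzj
        simpa [m, Function.update_eq_self] using this
      · exact ih z hz fun ℓ hℓ => hzre ℓ (by omega)
  intro z hz
  exact key d z hz fun ℓ hℓ => absurd hℓ (not_le.mpr ℓ.isLt)

/-- Identity lemma: a holomorphic function on a ball that vanishes on a small ball
around an interior point vanishes identically. -/
lemma prop_vanish {d : ℕ} {φ : (Fin d → ℂ) → ℂ} {c q : Fin d → ℂ} {R ε : ℝ}
    (hφ : DifferentiableOn ℂ φ (ball c R)) (hq : q ∈ ball c R) (hε : 0 < ε)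
    (hvan : ∀ z ∈ ball q ε, φ z = 0) :
    ∀ w ∈ ball c R, φ w = 0 := by
  intro w hw
  set m : ℂ → (Fin d → ℂ) := fun ζ => q + ζ • (w - q) with hm
  set A : Set ℂ := m ⁻¹' (ball c R) with hA
  have hdm : Differentiable ℂ m := (differentiable_const _).add (differentiable_id.smul_const _)
  have hopen : IsOpen A := isOpen_ball.preimage hdm.continuous
  have hconv : Convex ℝ A := by
    intro ζ₁ h₁ ζ₂ h₂ a b ha hb hab
    have habm : m (a • ζ₁ + b • ζ₂) = a • m ζ₁ + b • m ζ₂ := by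
      simp only [hm]
      rw [add_smul, smul_assoc, smul_assoc]
      have hq' : q = a • q + b • q := by rw [← add_smul, hab, one_smul]
      calc q + (a • (ζ₁ • (w - q)) + b • (ζ₂ • (w - q)))
          = (a • q + b • q) + (a • (ζ₁ • (w - q)) + b • (ζ₂ • (w - q))) := by rw [← hq']
        _ = a • (q + ζ₁ • (w - q)) + b • (q + ζ₂ • (w - q)) := by
            rw [smul_add, smul_add]; abel
    show m (a • ζ₁ + b • ζ₂) ∈ ball c R
    rw [habm]
    exact (convex_ball c R) h₁ h₂ ha hb hab
  have h0 : (0 : ℂ) ∈ A := by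
    simp only [hA, Set.mem_preimage, hm, zero_smul, add_zero]
    exact hq
  have h1 : (1 : ℂ) ∈ A := by
    simp only [hA, Set.mem_preimage, hm, one_smul]
    simpa using hw
  have hud : DifferentiableOn ℂ (φ ∘ m) A := hφ.comp hdm.differentiableOn fun ζ hζ => hζ
  have han : AnalyticOnNhd ℂ (φ ∘ m) A := hud.analyticOnNhd hopen
  have hev : (φ ∘ m) =ᶠ[nhds (0 : ℂ)] 0 := by
    have hδ : (0:ℝ) < ε / (‖w - q‖ + 1) := by positivity
    filter_upwards [Metric.ball_mem_nhds (0 : ℂ) hδ] with ζ hζ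
    have hζ' : ‖ζ‖ < ε / (‖w - q‖ + 1) := by
      simpa [dist_eq_norm] using hζ
    have hlt : ‖ζ‖ * ‖w - q‖ < ε := by
      have h1' : ‖ζ‖ * (‖w - q‖ + 1) < ε := by
        rw [← lt_div_iff₀ (by positivity)]
        exact hζ'
      nlinarith [norm_nonneg ζ, norm_nonneg (w - q)]
    refine hvan _ ?_
    rw [mem_ball, dist_eq_norm]
    simpa [hm, add_sub_cancel_left, norm_smul] using hlt
  have heqz := han.eqOn_zero_of_preconnected_of_eventuallyEq_zero hconv.isPreconnected h0 hev
  have := heqz h1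
  simpa [hm] using this

end Identity
section LinearAlgebra

/-- Double annihilator for submodules of real vector spaces. -/
lemma mem_of_forall_ann {E : Type*} [AddCommGroup E] [Module ℝ E] (W : Submodule ℝ E) (x : E)
    (h : ∀ μ : E →ₗ[ℝ] ℝ, (∀ w ∈ W, μ w = 0) → μ x = 0) : x ∈ W := by
  by_contra hx
  have hπ : W.mkQ x ≠ 0 := by
    simpa [Submodule.mkQ_apply, Submodule.Quotient.mk_eq_zero] using hx
  have hall : ∀ φ : Module.Dual ℝ (E ⧸ W), φ (W.mkQ x) = 0 := by
    intro φ
    refine h (φ.comp W.mkQ) ?_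
    intro w hw
    have hw0 : W.mkQ w = 0 := by
      simpa [Submodule.mkQ_apply, Submodule.Quotient.mk_eq_zero] using hw
    simp [LinearMap.comp_apply, hw0]
  exact hπ ((Module.forall_dual_apply_eq_zero_iff ℝ _).mp hall)

/-- Helly-type reduction: if the affine condition can be solved over every finite
subset of `S`, it can be solved over all of `S`. -/
lemma helly_reduce {n : ℕ} (S : Set (EndE n)) (g : EndE n → V n)
    (h : ∀ F : Finset (EndE n), ↑F ⊆ S → ∃ a b : V n, ∀ I ∈ F, g I = a + I b) :
    ∃ a b : V n, ∀ I ∈ S, g I = a + I b := by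
  classical
  let L : Finset (EndE n) → Submodule ℝ (V n × V n × ℝ) := fun F =>
    { carrier := {p | ∀ I ∈ F, p.2.2 • g I = p.1 + I p.2.1}
      add_mem' := by
        intro p q hp hq I hI
        have h1 := hp I hI
        have h2 := hq I hI
        show (p.2.2 + q.2.2) • g I = (p.1 + q.1) + I (p.2.1 + q.2.1)
        rw [add_smul, h1, h2, map_add]
        abel
      zero_mem' := by
        intro I _
        show (0 : ℝ) • g I = 0 + I 0
        simp
      smul_mem' := by
        intro t p hp I hI
        have h1 := hp I hI
        show (t • p.2.2) • g I = t • p.1 + I (t • p.2.1)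
        rw [smul_eq_mul, mul_smul, h1, smul_add, map_smul] }
  have hLmem : ∀ F (p : V n × V n × ℝ), p ∈ L F ↔ ∀ I ∈ F, p.2.2 • g I = p.1 + I p.2.1 :=
    fun F p => Iff.rfl
  let R : Set ℕ := {r | ∃ F : Finset (EndE n), ↑F ⊆ S ∧ Module.finrank ℝ (L F) = r}
  have hR : R.Nonempty := ⟨_, ∅, by simp, rfl⟩
  obtain ⟨F₀, hF₀S, hF₀r⟩ : sInf R ∈ R := Nat.sInf_mem hR
  obtain ⟨a, b, hab⟩ := h F₀ hF₀S
  refine ⟨a, b, fun I hI => ?_⟩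
  have hsub : ↑(insert I F₀) ⊆ S := by
    rw [Finset.coe_insert]
    exact Set.insert_subset hI hF₀S
  have hle : L (insert I F₀) ≤ L F₀ := fun p hp J hJ => hp J (Finset.mem_insert_of_mem hJ)
  have hrk : Module.finrank ℝ (L F₀) ≤ Module.finrank ℝ (L (insert I F₀)) := by
    rw [hF₀r]
    exact Nat.sInf_le ⟨insert I F₀, hsub, rfl⟩
  have heq : L (insert I F₀) = L F₀ := Submodule.eq_of_le_of_finrank_le hle hrk
  have hmem : (a, b, (1 : ℝ)) ∈ L F₀ := by
    intro J hJ
    simpa using hab J hJ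
  have h2 : (a, b, (1 : ℝ)) ∈ L (insert I F₀) := by rw [heq]; exact hmem
  simpa using h2 I (Finset.mem_insert_self I F₀)

end LinearAlgebra
section Geometry

variable {n d : ℕ}

/-- The real-linear chart `ℂ^d ≃ ℝ^d × ℝ^d`. -/
def cmap (d : ℕ) : (Fin d → ℂ) →L[ℝ] ((Fin d → ℝ) × (Fin d → ℝ)) :=
  LinearMap.toContinuousLinearMap <|
    (LinearMap.pi fun ℓ => Complex.reLm.comp (LinearMap.proj ℓ)).prod
      (LinearMap.pi fun ℓ => Complex.imLm.comp (LinearMap.proj ℓ))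

lemma cmap_apply (z : Fin d → ℂ) :
    cmap d z = (fun ℓ => (z ℓ).re, fun ℓ => (z ℓ).im) := rfl

lemma psi_comp (I : EndE n) : f ∘ Psi n d I = (f ∘ Phi n d I) ∘ (cmap d) := rfl

lemma psi_eq_phi_cmap (I : EndE n) (z : Fin d → ℂ) :
    Psi n d I z = Phi n d I (cmap d z) := rfl

lemma cmap_single_one (ℓ : Fin d) : cmap d (Pi.single ℓ (1 : ℂ)) = ex d ℓ := by
  rw [cmap_apply, ex]
  refine Prod.ext ?_ ?_ <;> funext m <;>
    · simp only [Pi.single_apply]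
      rcases eq_or_ne m ℓ with h | h <;> simp [h]

lemma cmap_single_I (ℓ : Fin d) : cmap d (Pi.single ℓ Complex.I) = ey d ℓ := by
  rw [cmap_apply, ey]
  refine Prod.ext ?_ ?_ <;> funext m <;>
    · simp only [Pi.single_apply]
      rcases eq_or_ne m ℓ with h | h <;> simp [h]

lemma continuous_Phi (I : EndE n) : Continuous (Phi n d I) := by
  unfold Phi
  exact continuous_pi fun ℓ =>
    (((continuous_apply ℓ).comp continuous_fst).smul continuous_const).add
      (((continuous_apply ℓ).comp continuous_snd).smul continuous_const)

lemma phi_mem_CId (I : EndE n) (p : (Fin d → ℝ) × (Fin d → ℝ)) :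
    Phi n d I p ∈ CId n d I := fun ℓ => ⟨p.1 ℓ, p.2 ℓ, rfl⟩

lemma phiPre_open {𝒞 : Set (EndE n)} {Ω : Set (Fin d → EndE n)} (hΩ : SliceOpen n d 𝒞 Ω)
    {I : EndE n} (hI : I ∈ 𝒞) : IsOpen (Phi n d I ⁻¹' Ω) := by
  obtain ⟨U, hU, hUeq⟩ := hΩ.2 I hI
  have heq : Phi n d I ⁻¹' Ω = Phi n d I ⁻¹' U := by
    ext p
    constructor
    · intro hp
      have : Phi n d I p ∈ Ω ∩ CId n d I := ⟨hp, phi_mem_CId I p⟩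
      rw [hUeq] at this
      exact this.1
    · intro hp
      have : Phi n d I p ∈ U ∩ CId n d I := ⟨hp, phi_mem_CId I p⟩
      rw [← hUeq] at this
      exact this.1
  rw [heq]
  exact hU.preimage (continuous_Phi I)

lemma psiPre_open {𝒞 : Set (EndE n)} {Ω : Set (Fin d → EndE n)} (hΩ : SliceOpen n d 𝒞 Ω)
    {I : EndE n} (hI : I ∈ 𝒞) : IsOpen (Psi n d I ⁻¹' Ω) := by
  have : Psi n d I ⁻¹' Ω = cmap d ⁻¹' (Phi n d I ⁻¹' Ω) := rfl
  rw [this]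
  exact (phiPre_open hΩ hI).preimage (cmap d).continuous

/-- Differentiability and the Cauchy-Riemann relations for `f ∘ Ψ_I`. -/
lemma diffCR {𝒞 : Set (EndE n)} (hcs : 𝒞 ⊆ CS n) {Ω : Set (Fin d → EndE n)}
    (hΩ : SliceOpen n d 𝒞 Ω) {f : (Fin d → EndE n) → V n} (hf : WSRegular n d 𝒞 Ω f)
    {I : EndE n} (hI : I ∈ 𝒞) {z : Fin d → ℂ} (hz : z ∈ Psi n d I ⁻¹' Ω) :
    DifferentiableAt ℝ (f ∘ Psi n d I) z ∧
      ∀ ℓ, fderiv ℝ (f ∘ Psi n d I) z (Pi.single ℓ Complex.I) =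
        I (fderiv ℝ (f ∘ Psi n d I) z (Pi.single ℓ (1 : ℂ))) := by
  obtain ⟨hdiff, hCR⟩ := hf I hI
  have hop := phiPre_open hΩ hI
  have hpz : cmap d z ∈ Phi n d I ⁻¹' Ω := hz
  have hda : DifferentiableAt ℝ (f ∘ Phi n d I) (cmap d z) :=
    hdiff.differentiableAt (hop.mem_nhds hpz)
  have hcomp : HasFDerivAt (f ∘ Psi n d I)
      ((fderiv ℝ (f ∘ Phi n d I) (cmap d z)).comp (cmap d)) z := by
    rw [psi_comp I]
    exact hda.hasFDerivAt.comp z (cmap d).hasFDerivAt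
  have hII : ∀ v : V n, I (I v) = -v := by
    intro v
    have h1 : (I * I) v = (-1 : EndE n) v := by rw [hcs hI]
    simpa [ContinuousLinearMap.mul_apply] using h1
  refine ⟨hcomp.differentiableAt, fun ℓ => ?_⟩
  rw [hcomp.fderiv]
  simp only [ContinuousLinearMap.comp_apply, cmap_single_I, cmap_single_one]
  have h := hCR (cmap d z) hpz ℓ
  have h2 := congrArg (fun v => I v) h
  simp only [map_add, map_zero, hII] at h2
  exact (add_neg_eq_zero.mp h2).symm

end Geometry
section Key

open Set Metric

/-- The key lemma: along a path with real initial point, the representation formula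
holds at the endpoint simultaneously for every finite set of admissible complex
structures. -/
lemma keyF (n d : ℕ) (𝒞 : Set (EndE n)) (hcs : 𝒞 ⊆ CS n)
    (Ω : Set (Fin d → EndE n)) (hΩ : SliceOpen n d 𝒞 Ω)
    (f : (Fin d → EndE n) → V n) (hf : WSRegular n d 𝒞 Ω f)
    (γ : ℝ → Fin d → ℂ) (hγc : ContinuousOn γ (Set.Icc 0 1)) (hγ0 : ∀ ℓ, (γ 0 ℓ).im = 0)
    (F : Finset (EndE n)) (hF : ∀ I ∈ F, I ∈ CPath n d 𝒞 Ω γ) :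
    ∃ a b : V n, ∀ I ∈ F, f (Psi n d I (γ 1)) = a + I b := by
  classical
  have hFC : ∀ I : ↥F, (I : EndE n) ∈ 𝒞 := fun I => (hF I.1 I.2).1
  have hFmem : ∀ (I : ↥F), ∀ t ∈ Set.Icc (0:ℝ) 1, Psi n d I.1 (γ t) ∈ Ω :=
    fun I => (hF I.1 I.2).2
  have hFII : ∀ (I : ↥F) (v : V n), I.1 (I.1 v) = -v := by
    intro I v
    have h1 : (I.1 * I.1) v = (-1 : EndE n) v := by rw [hcs (hFC I)]
    simpa [ContinuousLinearMap.mul_apply] using h1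
  -- the model space and its structures
  let E := (↥F → V n)
  let M : (V n × V n) →ₗ[ℝ] E := LinearMap.pi fun I =>
    LinearMap.fst ℝ (V n) (V n) + (I.1 : V n →ₗ[ℝ] V n).comp (LinearMap.snd ℝ (V n) (V n))
  have hMapp : ∀ (a b : V n) (I : ↥F), M (a, b) I = a + I.1 b := fun a b I => rfl
  let W : Submodule ℝ E := LinearMap.range M
  let ih : E →ₗ[ℝ] E := LinearMap.pi fun I => (I.1 : V n →ₗ[ℝ] V n).comp (LinearMap.proj I)
  have hihapp : ∀ (x : E) (I : ↥F), ih x I = I.1 (x I) := fun x I => rfl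
  have hihih : ∀ x : E, ih (ih x) = -x := by
    intro x
    funext I
    simp only [hihapp, hFII]
    rfl
  have hWinv : ∀ x ∈ W, ih x ∈ W := by
    rintro x ⟨⟨a, b⟩, rfl⟩
    refine ⟨(-b, a), ?_⟩
    funext I
    simp only [hMapp, hihapp, map_add, hFII]
    abel
  -- the function with values in E
  let hfun : (Fin d → ℂ) → E := fun z I => f (Psi n d I.1 z)
  -- the common domain
  let Dset : Set (Fin d → ℂ) := ⋂ I : ↥F, Psi n d I.1 ⁻¹' Ω
  have hDopen : IsOpen Dset := isOpen_iInter_of_finite fun I => psiPre_open hΩ (hFC I)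
  have hγD : ∀ t ∈ Set.Icc (0:ℝ) 1, γ t ∈ Dset := fun t ht =>
    Set.mem_iInter.mpr fun I => hFmem I t ht
  -- the functionals
  let Λ : (E →ₗ[ℝ] ℝ) → (E →L[ℝ] ℂ) := fun μ => LinearMap.toContinuousLinearMap
    (Complex.ofRealAm.toLinearMap.comp μ -
      (LinearMap.toSpanSingleton ℝ ℂ Complex.I).comp (μ.comp ih))
  have hΛapp : ∀ (μ : E →ₗ[ℝ] ℝ) (x : E),
      Λ μ x = (μ x : ℂ) - (μ (ih x) : ℂ) * Complex.I := by
    intro μ x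
    show Complex.ofRealAm (μ x) - μ (ih x) • Complex.I = _
    rw [Complex.ofRealAm_coe, Complex.real_smul]
  have hΛih : ∀ (μ : E →ₗ[ℝ] ℝ) (x : E), Λ μ (ih x) = Complex.I * Λ μ x := by
    intro μ x
    rw [hΛapp, hΛapp, hihih, map_neg]
    push_cast
    linear_combination (μ (ih x) : ℂ) * Complex.I_mul_I
  let Phiμ : (E →ₗ[ℝ] ℝ) → (Fin d → ℂ) → ℂ := fun μ z => Λ μ (hfun z)
  -- differentiability of Phiμ
  have hdiffμ : ∀ μ : E →ₗ[ℝ] ℝ, DifferentiableOn ℂ (Phiμ μ) Dset := by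
    intro μ z hz
    apply DifferentiableAt.differentiableWithinAt
    have hzI : ∀ I : ↥F, z ∈ Psi n d I.1 ⁻¹' Ω := fun I => Set.mem_iInter.mp hz I
    have hcomp := fun I : ↥F => diffCR hcs hΩ hf (hFC I) (hzI I)
    set D : (Fin d → ℂ) →L[ℝ] E :=
      ContinuousLinearMap.pi (fun I : ↥F => fderiv ℝ (f ∘ Psi n d I.1) z) with hDdef
    have hDf : HasFDerivAt hfun D z := hasFDerivAt_pi.mpr fun I => ((hcomp I).1).hasFDerivAt
    have hφR : HasFDerivAt (Phiμ μ) ((Λ μ).comp D) z := ((Λ μ).hasFDerivAt.comp z hDf :)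
    have hDcr : ∀ ℓ, D (Pi.single ℓ Complex.I) = ih (D (Pi.single ℓ (1 : ℂ))) := by
      intro ℓ
      funext I
      have h1 := (hcomp I).2 ℓ
      simp only [hDdef, ContinuousLinearMap.pi_apply, hihapp]
      exact h1
    have hsingle : ∀ (v : Fin d → ℂ) (ℓ : Fin d),
        Pi.single ℓ (v ℓ) = (v ℓ).re • (Pi.single ℓ (1 : ℂ) : Fin d → ℂ)
          + (v ℓ).im • (Pi.single ℓ Complex.I : Fin d → ℂ) := by
      intro v ℓ
      funext m
      rcases eq_or_ne m ℓ with h | h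
      · subst h
        simp only [Pi.single_eq_same, Pi.add_apply, Pi.smul_apply, Complex.real_smul, mul_one]
        exact (Complex.re_add_im (v m)).symm
      · simp [Pi.single_eq_of_ne h]
    set cc : Fin d → ℂ := fun ℓ => (Λ μ) (D (Pi.single ℓ (1 : ℂ))) with hccdef
    have hkey : ∀ v : Fin d → ℂ, (Λ μ) (D v) = ∑ ℓ, (v ℓ) * cc ℓ := by
      intro v
      have hv : v = ∑ ℓ, Pi.single ℓ (v ℓ) := (Finset.univ_sum_single v).symm
      conv_lhs => rw [hv]
      rw [map_sum, map_sum]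
      refine Finset.sum_congr rfl ?_
      intro ℓ _
      rw [hsingle v ℓ, map_add, map_smul, map_smul, map_add, map_smul, map_smul,
        hDcr ℓ, hΛih, Complex.real_smul, Complex.real_smul]
      conv_rhs => rw [← Complex.re_add_im (v ℓ)]
      ring
    let Lc : (Fin d → ℂ) →ₗ[ℂ] ℂ :=
      ∑ ℓ, (LinearMap.proj ℓ : (Fin d → ℂ) →ₗ[ℂ] ℂ).smulRight (cc ℓ)
    have hLcapp : ∀ v, Lc v = ∑ ℓ, (v ℓ) * cc ℓ := by
      intro v
      simp [Lc, LinearMap.smulRight_apply, LinearMap.proj_apply, smul_eq_mul]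
    have hrestrict : (LinearMap.toContinuousLinearMap Lc).restrictScalars ℝ = (Λ μ).comp D := by
      apply ContinuousLinearMap.ext
      intro v
      show Lc v = (Λ μ) (D v)
      rw [hLcapp, hkey]
    exact (hasFDerivAt_of_restrictScalars ℝ hφR hrestrict).differentiableAt
  -- vanishing at real points
  have hreal : ∀ (μ : E →ₗ[ℝ] ℝ), (∀ w ∈ W, μ w = 0) →
      ∀ z ∈ Dset, (∀ ℓ, (z ℓ).im = 0) → Phiμ μ z = 0 := by
    intro μ hμ z _ him
    have hpsi : ∀ I : ↥F, Psi n d I.1 z = fun ℓ => (z ℓ).re • (1 : EndE n) := by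
      intro I
      funext ℓ
      show (z ℓ).re • (1 : EndE n) + (z ℓ).im • I.1 = _
      have h0 : ((0:ℝ) • I.1 : EndE n) = 0 := zero_smul ℝ I.1
      rw [him ℓ, h0, add_zero]
    have hx : hfun z = M (f (fun ℓ => (z ℓ).re • (1 : EndE n)), 0) := by
      funext I
      rw [hMapp]
      show f (Psi n d I.1 z) = _
      rw [hpsi I, map_zero, add_zero]
    have hxW : hfun z ∈ W := ⟨_, hx.symm⟩
    show Λ μ (hfun z) = 0
    rw [hΛapp, hμ _ hxW, hμ _ (hWinv _ hxW)]
    simp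
  -- the connectedness argument
  have hend : ∀ (μ : E →ₗ[ℝ] ℝ), (∀ w ∈ W, μ w = 0) → Phiμ μ (γ 1) = 0 := by
    have h01 : (0:ℝ) ∈ Set.Icc (0:ℝ) 1 := ⟨le_refl 0, zero_le_one⟩
    set good : ℝ → Prop := fun t => ∃ ε > 0, ball (γ t) ε ⊆ Dset ∧
      ∀ μ : E →ₗ[ℝ] ℝ, (∀ w ∈ W, μ w = 0) → ∀ z ∈ ball (γ t) ε, Phiμ μ z = 0 with hgood
    set A : Set ℝ := {t | t ∈ Set.Icc (0:ℝ) 1 ∧ good t} with hA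
    have hA0 : (0:ℝ) ∈ A := by
      obtain ⟨ε, hε, hball⟩ := Metric.isOpen_iff.mp hDopen (γ 0) (hγD 0 h01)
      refine ⟨h01, ε, hε, hball, ?_⟩
      intro μ hμ
      exact totallyReal_vanish hγ0 ((hdiffμ μ).mono hball)
        (fun z hz hzre => hreal μ hμ z (hball hz) hzre)
    have hstep : ∀ c ∈ Set.Icc (0:ℝ) 1, (∀ δ > 0, ∃ t ∈ A, |t - c| < δ) → c ∈ A := by
      intro c hc happ
      obtain ⟨r, hr, hball⟩ := Metric.isOpen_iff.mp hDopen (γ c) (hγD c hc)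
      obtain ⟨δ, hδ, hcont⟩ := Metric.continuousWithinAt_iff.mp (hγc c hc) (r/2) (by linarith)
      obtain ⟨t₀, ht₀A, ht₀c⟩ := happ δ hδ
      have hd0 : dist (γ t₀) (γ c) < r / 2 := hcont ht₀A.1 (by rwa [Real.dist_eq])
      obtain ⟨ε₀, hε₀, hball₀, hvan₀⟩ := ht₀A.2
      refine ⟨hc, r, hr, hball, ?_⟩
      intro μ hμ
      exact prop_vanish ((hdiffμ μ).mono hball)
        (mem_ball.mpr (lt_of_lt_of_le hd0 (by linarith))) hε₀ (hvan₀ μ hμ)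
    have hAbdd : BddAbove A := ⟨1, fun t ht => ht.1.2⟩
    have hAne : A.Nonempty := ⟨0, hA0⟩
    set c := sSup A with hcdef
    have hc0 : (0:ℝ) ≤ c := le_csSup hAbdd hA0
    have hc1 : c ≤ 1 := csSup_le hAne fun t ht => ht.1.2
    have hcA : c ∈ A := by
      refine hstep c ⟨hc0, hc1⟩ ?_
      intro δ hδ
      obtain ⟨t, htA, htlt⟩ := exists_lt_of_lt_csSup hAne (show c - δ < c by linarith)
      have htle : t ≤ c := le_csSup hAbdd htA
      exact ⟨t, htA, abs_lt.mpr ⟨by linarith, by linarith⟩⟩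
    have hceq : c = 1 := by
      by_contra hne
      have hclt : c < 1 := lt_of_le_of_ne hc1 hne
      obtain ⟨ε, hε, hball, hvan⟩ := hcA.2
      obtain ⟨δ, hδ, hcont⟩ :=
        Metric.continuousWithinAt_iff.mp (hγc c ⟨hc0, hc1⟩) (ε/2) (by linarith)
      set t₁ := min 1 (c + δ/2) with ht₁def
      have ht₁Icc : t₁ ∈ Set.Icc (0:ℝ) 1 := ⟨le_min (by linarith) (by linarith), min_le_left _ _⟩
      have hct₁ : c < t₁ := lt_min hclt (by linarith)
      have ht₁d : dist t₁ c < δ := by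
        rw [Real.dist_eq, abs_lt]
        have h2 : t₁ ≤ c + δ/2 := min_le_right _ _
        constructor <;> linarith
      have hdist₁ : dist (γ t₁) (γ c) < ε/2 := hcont ht₁Icc ht₁d
      have ht₁A : t₁ ∈ A := by
        refine ⟨ht₁Icc, ε/2, by linarith, ?_, ?_⟩
        · intro z hz
          apply hball
          rw [mem_ball] at hz ⊢
          calc dist z (γ c) ≤ dist z (γ t₁) + dist (γ t₁) (γ c) := dist_triangle _ _ _
            _ < ε/2 + ε/2 := add_lt_add hz hdist₁
            _ = ε := by ring
        · intro μ hμ z hz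
          apply hvan μ hμ
          rw [mem_ball] at hz ⊢
          calc dist z (γ c) ≤ dist z (γ t₁) + dist (γ t₁) (γ c) := dist_triangle _ _ _
            _ < ε/2 + ε/2 := add_lt_add hz hdist₁
            _ = ε := by ring
      have hle : t₁ ≤ c := le_csSup hAbdd ht₁A
      linarith
    intro μ hμ
    obtain ⟨ε, hε, hball, hvan⟩ := hcA.2
    have hv := hvan μ hμ (γ c) (mem_ball_self hε)
    rwa [hceq] at hv
  -- conclusion
  have hxW : hfun (γ 1) ∈ W := by
    apply mem_of_forall_ann
    intro μ hμ
    have h1 : Λ μ (hfun (γ 1)) = 0 := hend μ hμ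
    rw [hΛapp] at h1
    have h2 := congrArg Complex.re h1
    simpa using h2
  obtain ⟨⟨a, b⟩, hab⟩ := hxW
  refine ⟨a, b, fun I hI => ?_⟩
  have := congrFun hab ⟨I, hI⟩
  rw [hMapp] at this
  exact this.symm

end Key

/-- Every weak slice regular function on a slice-open set is path-slice: there is a
stem function F = (F₁, F₂) on 𝒫(ℂ^d, Ω) with f(γ^I(1)) = F₁(γ) + I(F₂(γ)) for every
γ ∈ 𝒫(ℂ^d, Ω) and every I ∈ 𝒞(γ, Ω). -/
theorem weak_slice_regular_is_path_slice (n d : ℕ) (hn : 1 ≤ n) (hd : 1 ≤ d)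
    (𝒞 : Set (EndE n)) (h𝒞 : 𝒞.Nonempty) (hsym : ∀ I ∈ 𝒞, -I ∈ 𝒞) (hcs : 𝒞 ⊆ CS n)
    (Ω : Set (Fin d → EndE n)) (hΩ : SliceOpen n d 𝒞 Ω)
    (f : (Fin d → EndE n) → V n) (hf : WSRegular n d 𝒞 Ω f) :
    ∃ F₁ F₂ : (ℝ → Fin d → ℂ) → V n,
      ∀ γ : ℝ → Fin d → ℂ, PathIn n d 𝒞 Ω γ →
        ∀ I ∈ CPath n d 𝒞 Ω γ,
          f (Psi n d I (γ 1)) = F₁ γ + I (F₂ γ) := by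
  
  classical
  let Q : (ℝ → Fin d → ℂ) → Prop := fun γ =>
    ∃ p : V n × V n, ∀ I ∈ CPath n d 𝒞 Ω γ, f (Psi n d I (γ 1)) = p.1 + I p.2
  have hQ : ∀ γ, PathIn n d 𝒞 Ω γ → Q γ := by
    intro γ hγ
    obtain ⟨a, b, hab⟩ := helly_reduce (CPath n d 𝒞 Ω γ) (fun I => f (Psi n d I (γ 1)))
      (fun F hFsub => keyF n d 𝒞 hcs Ω hΩ f hf γ hγ.1.1 hγ.1.2 F
        (fun I hI => hFsub (Finset.mem_coe.mpr hI)))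
    exact ⟨(a, b), hab⟩
  refine ⟨fun γ => if h : Q γ then (Classical.choose h).1 else 0,
          fun γ => if h : Q γ then (Classical.choose h).2 else 0, ?_⟩
  intro γ hγ I hI
  have hq := hQ γ hγ
  simp only [dif_pos hq]
  exact Classical.choose_spec hq I hI
end
end
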